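/- arXiv:2409.06528 — 4 statements merged into one kernel-verified Lean document; each statement's English description precedes it below -/
import Mathlib

section
/- Suppose (u,v) ∈ H¹(ℝ³) × H¹(ℝ³) with u, v ≥ 0, u ≢ 0, u, v ∈ C²(ℝ³), and (u,v) solves −Δu + λ₁u = u³ + βuv and −Δv + λ₂v = ½v² + ½βu² on ℝ³ with β > 0. Then λ₁ > 0 and λ₂ > 0. -/
open MeasureTheory Filter Set
open scoped ENNReal Topology

noncomputable section

abbrev R3 : Type := EuclideanSpace ℝ (Fin 3)

/-- membership in the Sobolev space `H¹(ℝ³)`: differentiable, `L²`, with `L²` gradient. -/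
noncomputable def H1 (u : R3 → ℝ) : Prop :=
  Differentiable ℝ u ∧ MemLp u 2 volume ∧ MemLp (fun x => ‖gradient u x‖) 2 volume

/-- The energy functional of the Schrödinger–KdV system. -/
noncomputable def J (β : ℝ) (u v : R3 → ℝ) : ℝ :=
  (1/2) * (∫ x, (‖gradient u x‖^2 + ‖gradient v x‖^2))
    - (1/4) * (∫ x, (u x)^4) - (1/6) * (∫ x, (v x)^3)
    - (β/2) * (∫ x, (u x)^2 * v x)

/-- The Laplacian on `ℝ³`, as the sum of pure second partial derivatives. -/
noncomputable def lap (u : R3 → ℝ) (x : R3) : ℝ :=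
  ∑ i : Fin 3, iteratedFDeriv ℝ 2 u x ![EuclideanSpace.single i 1, EuclideanSpace.single i 1]

namespace SKdV

abbrev e (i : Fin 3) : R3 := EuclideanSpace.single i 1

noncomputable def D (f : R3 → ℝ) (i : Fin 3) : R3 → ℝ := fun x => fderiv ℝ f x (e i)

noncomputable def lap' (f : R3 → ℝ) (x : R3) : ℝ :=
  ∑ i : Fin 3, fderiv ℝ (D f i) x (e i)

lemma contDiff_D {f : R3 → ℝ} (hf : ContDiff ℝ 2 f) (i : Fin 3) :
    ContDiff ℝ 1 (D f i) := by
  have h1 : ContDiff ℝ 1 (fderiv ℝ f) := hf.fderiv_right (by norm_num)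
  exact (ContinuousLinearMap.apply ℝ ℝ (e i)).contDiff.comp h1

lemma fderiv_D {f : R3 → ℝ} (hf : ContDiff ℝ 2 f) (i : Fin 3) (x : R3) :
    fderiv ℝ (D f i) x (e i) = fderiv ℝ (fderiv ℝ f) x (e i) (e i) := by
  have h1 : ContDiff ℝ 1 (fderiv ℝ f) := hf.fderiv_right (by norm_num)
  have h2 : DifferentiableAt ℝ (fderiv ℝ f) x := (h1.differentiable (by norm_num)) x
  have h3 : fderiv ℝ (D f i) x =
      (ContinuousLinearMap.apply ℝ ℝ (e i)).comp (fderiv ℝ (fderiv ℝ f) x) := by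
    have := ((ContinuousLinearMap.apply ℝ ℝ (e i)).hasFDerivAt.comp x h2.hasFDerivAt)
    exact this.fderiv
  rw [h3]; rfl

lemma lap_eq {f : R3 → ℝ} (hf : ContDiff ℝ 2 f) (x : R3) : lap f x = lap' f x := by
  unfold lap lap'
  refine Finset.sum_congr rfl fun i _ => ?_
  rw [iteratedFDeriv_two_apply, fderiv_D hf]
  simp

lemma continuous_D2 {f : R3 → ℝ} (hf : ContDiff ℝ 2 f) (i : Fin 3) :
    Continuous (fun x => fderiv ℝ (D f i) x (e i)) := by
  have h1 : Continuous (fderiv ℝ (D f i)) := (contDiff_D hf i).continuous_fderiv (by norm_num)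
  exact (ContinuousLinearMap.apply ℝ ℝ (e i)).continuous.comp h1

lemma hcs_D {φ : R3 → ℝ} (hφs : HasCompactSupport φ) (i : Fin 3) :
    HasCompactSupport (D φ i) := hφs.fderiv_apply ℝ (e i)

lemma hcs_D2 {φ : R3 → ℝ} (hφs : HasCompactSupport φ) (i : Fin 3) :
    HasCompactSupport (fun x => fderiv ℝ (D φ i) x (e i)) :=
  (hcs_D hφs i).fderiv_apply ℝ (e i)

set_option maxHeartbeats 1000000 in
/-- integration by parts twice, per direction -/
lemma ibp_dir {w φ : R3 → ℝ} (hw : ContDiff ℝ 2 w) (hφ : ContDiff ℝ 2 φ)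
    (hφs : HasCompactSupport φ) (i : Fin 3) :
    ∫ x, w x * fderiv ℝ (D φ i) x (e i) = ∫ x, fderiv ℝ (D w i) x (e i) * φ x := by
  have cw : Continuous w := hw.continuous
  have cφ : Continuous φ := hφ.continuous
  have cDw : Continuous (D w i) := (contDiff_D hw i).continuous
  have cDφ : Continuous (D φ i) := (contDiff_D hφ i).continuous
  have cD2w := continuous_D2 hw i
  have cD2φ := continuous_D2 hφ i
  have I1 : Integrable (fun x => fderiv ℝ w x (e i) * D φ i x) volume :=
    (cDw.mul cDφ).integrable_of_hasCompactSupport ((hcs_D hφs i).mul_left)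
  have I2 : Integrable (fun x => w x * fderiv ℝ (D φ i) x (e i)) volume :=
    (cw.mul cD2φ).integrable_of_hasCompactSupport ((hcs_D2 hφs i).mul_left)
  have I3 : Integrable (fun x => w x * D φ i x) volume :=
    (cw.mul cDφ).integrable_of_hasCompactSupport ((hcs_D hφs i).mul_left)
  have I4 : Integrable (fun x => fderiv ℝ φ x (e i) * D w i x) volume :=
    (cDφ.mul cDw).integrable_of_hasCompactSupport ((hcs_D hφs i).mul_right)
  have I5 : Integrable (fun x => φ x * fderiv ℝ (D w i) x (e i)) volume :=
    (cφ.mul cD2w).integrable_of_hasCompactSupport (hφs.mul_right)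
  have I6 : Integrable (fun x => φ x * D w i x) volume :=
    (cφ.mul cDw).integrable_of_hasCompactSupport (hφs.mul_right)
  have h1 : ∫ x, w x * fderiv ℝ (D φ i) x (e i) = - ∫ x, fderiv ℝ w x (e i) * D φ i x :=
    integral_mul_fderiv_eq_neg_fderiv_mul_of_integrable I1 I2 I3
      (fun x _ => hw.differentiable (by norm_num) x)
        (fun x _ => (contDiff_D hφ i).differentiable (by norm_num) x)
  have h2 : ∫ x, φ x * fderiv ℝ (D w i) x (e i) = - ∫ x, fderiv ℝ φ x (e i) * D w i x :=
    integral_mul_fderiv_eq_neg_fderiv_mul_of_integrable I4 I5 I6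
      (fun x _ => hφ.differentiable (by norm_num) x)
        (fun x _ => (contDiff_D hw i).differentiable (by norm_num) x)
  have e1 : ∫ x, fderiv ℝ w x (e i) * D φ i x = ∫ x, fderiv ℝ φ x (e i) * D w i x := by
    apply integral_congr_ae; filter_upwards with x; rw [mul_comm]; rfl
  have e2 : ∫ x, fderiv ℝ (D w i) x (e i) * φ x = ∫ x, φ x * fderiv ℝ (D w i) x (e i) := by
    apply integral_congr_ae; filter_upwards with x; rw [mul_comm]
  rw [h1, e1, ← h2, e2]

set_option maxHeartbeats 1000000 in
lemma ibp {w φ : R3 → ℝ} (hw : ContDiff ℝ 2 w) (hφ : ContDiff ℝ 2 φ)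
    (hφs : HasCompactSupport φ) :
    ∫ x, w x * lap' φ x = ∫ x, lap' w x * φ x := by
  have h1 : ∫ x, w x * lap' φ x = ∑ i : Fin 3, ∫ x, w x * fderiv ℝ (D φ i) x (e i) := by
    rw [← integral_finset_sum]
    · apply integral_congr_ae; filter_upwards with x
      rw [lap', Finset.mul_sum]
    · intro i _
      exact (hw.continuous.mul (continuous_D2 hφ i)).integrable_of_hasCompactSupport
        ((hcs_D2 hφs i).mul_left)
  have h2 : ∫ x, lap' w x * φ x = ∑ i : Fin 3, ∫ x, fderiv ℝ (D w i) x (e i) * φ x := by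
    rw [← integral_finset_sum]
    · apply integral_congr_ae; filter_upwards with x
      rw [lap', Finset.sum_mul]
    · intro i _
      exact ((continuous_D2 hw i).mul hφ.continuous).integrable_of_hasCompactSupport
        (hφs.mul_left)
  rw [h1, h2]
  exact Finset.sum_congr rfl fun i _ => ibp_dir hw hφ hφs i

lemma fderiv_comp_smul {f : R3 → ℝ} (hf : Differentiable ℝ f) (c : ℝ) (x v : R3) :
    fderiv ℝ (fun y => f (c • y)) x v = c * fderiv ℝ f (c • x) v := by
  have hL : HasFDerivAt (fun y : R3 => c • y)
      (c • ContinuousLinearMap.id ℝ R3) x := (hasFDerivAt_id x).const_smul c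
  have h : fderiv ℝ (fun y => f (c • y)) x =
      (fderiv ℝ f (c • x)).comp (c • ContinuousLinearMap.id ℝ R3) :=
    ((hf (c • x)).hasFDerivAt.comp x hL).fderiv
  rw [h]
  simp [mul_comm]

lemma diff_comp_smul {f : R3 → ℝ} (hf : Differentiable ℝ f) (c : ℝ) :
    Differentiable ℝ (fun y => f (c • y)) := by
  exact hf.comp (differentiable_id.const_smul c)

lemma lap'_comp_smul {f : R3 → ℝ} (hf : ContDiff ℝ 2 f) (c : ℝ) (x : R3) :
    lap' (fun y => f (c • y)) x = c ^ 2 * lap' f (c • x) := by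
  have hfd : Differentiable ℝ f := hf.differentiable (by norm_num)
  unfold lap'
  rw [Finset.mul_sum]
  refine Finset.sum_congr rfl fun i _ => ?_
  have hD : D (fun y => f (c • y)) i = fun z => c * D f i (c • z) := by
    funext z; exact fderiv_comp_smul hfd c z (e i)
  have hDfd : Differentiable ℝ (D f i) := (contDiff_D hf i).differentiable (by norm_num)
  have hcomp : DifferentiableAt ℝ (fun z => D f i (c • z)) x :=
    (diff_comp_smul hDfd c) x
  rw [hD]
  have h2 : fderiv ℝ (fun z => c * D f i (c • z)) x =
      c • fderiv ℝ (fun z => D f i (c • z)) x := fderiv_const_mul hcomp c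
  rw [h2]
  have h3 : fderiv ℝ (fun z => D f i (c • z)) x (e i) = c * fderiv ℝ (D f i) (c • x) (e i) :=
    fderiv_comp_smul hDfd c x (e i)
  simp only [ContinuousLinearMap.smul_apply, smul_eq_mul, h3]
  ring

lemma continuous_lap' {f : R3 → ℝ} (hf : ContDiff ℝ 2 f) : Continuous (lap' f) :=
  continuous_finset_sum _ fun i _ => continuous_D2 hf i

lemma hcs_lap' {φ : R3 → ℝ} (hφs : HasCompactSupport φ) : HasCompactSupport (lap' φ) := by
  have h : lap' φ = fun x => (fderiv ℝ (D φ 0) x (e 0) + fderiv ℝ (D φ 1) x (e 1))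
      + fderiv ℝ (D φ 2) x (e 2) := by
    funext x; rw [lap', Fin.sum_univ_three]
  rw [h]
  exact ((hcs_D2 hφs 0).add (hcs_D2 hφs 1)).add (hcs_D2 hφs 2)

lemma rpow_two_norm (a : ℝ) : ‖a‖ ^ (2:ℝ) = a ^ 2 := by
  rw [show (2:ℝ) = ((2:ℕ):ℝ) by norm_num, Real.rpow_natCast]
  simp [sq_abs]

lemma rpow_half_sq {x : ℝ} (hx : 0 ≤ x) : (x ^ ((1:ℝ)/2)) ^ 2 = x := by
  rw [← Real.rpow_natCast (x ^ ((1:ℝ)/2)) 2, ← Real.rpow_mul hx]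
  norm_num

set_option maxHeartbeats 1000000 in
lemma lap'_nonpos_eq_zero {w : R3 → ℝ} (hw : ContDiff ℝ 2 w) (hw2 : MemLp w 2 volume)
    (hneg : ∀ x, lap' w x ≤ 0) (x₀ : R3) : lap' w x₀ = 0 := by
  by_contra hne
  have hx0 : lap' w x₀ < 0 := lt_of_le_of_ne (hneg x₀) hne
  set ε : ℝ := -lap' w x₀ with hε
  have hεpos : 0 < ε := by simp only [hε]; linarith
  have hcont : Continuous (lap' w) := continuous_lap' hw
  -- find a ball where lap' w < -ε/2
  have hopen : IsOpen {y : R3 | lap' w y < -(ε/2)} := isOpen_lt hcont continuous_const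
  have hx0mem : x₀ ∈ {y : R3 | lap' w y < -(ε/2)} := by
    simp only [mem_setOf_eq]; linarith
  obtain ⟨δ, hδpos, hballs⟩ := Metric.isOpen_iff.1 hopen x₀ hx0mem
  set K := Metric.ball x₀ δ with hK
  have hvolK_pos : 0 < (volume K).toReal :=
    ENNReal.toReal_pos (Metric.measure_ball_pos volume x₀ hδpos).ne' measure_ball_lt_top.ne
  set volK := (volume K).toReal
  set c0 : ℝ := ε/2 * volK with hc0
  have hc0pos : 0 < c0 := by positivity
  -- bump function
  set η : ContDiffBump (0:R3) := ⟨1, 2, one_pos, one_lt_two⟩ with hη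
  have hηC : ContDiff ℝ 2 (⇑η) := η.contDiff
  set Cη : ℝ := ∫ x, (lap' (⇑η) x)^2 with hCη
  have hCη0 : 0 ≤ Cη := integral_nonneg fun x => sq_nonneg _
  set Sw : ℝ := ∫ x, (w x)^2 with hSw
  have hSw0 : 0 ≤ Sw := integral_nonneg fun x => sq_nonneg _
  -- choice of R
  set R : ℝ := max (‖x₀‖ + δ) (max 1 ((Sw * Cη + 1) / c0^2)) with hRdef
  have hR1 : (1:ℝ) ≤ R := le_trans (le_max_left _ _) (le_max_right _ _)
  have hRpos : (0:ℝ) < R := lt_of_lt_of_le one_pos hR1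
  have hRx : ‖x₀‖ + δ ≤ R := le_max_left _ _
  have hRbig : (Sw * Cη + 1) / c0^2 ≤ R := le_trans (le_max_right _ _) (le_max_right _ _)
  -- test function
  set φ : R3 → ℝ := fun y => η (R⁻¹ • y) with hφdef
  have hφC : ContDiff ℝ 2 φ := hηC.comp (contDiff_const_smul R⁻¹)
  have hφs : HasCompactSupport φ := by
    apply HasCompactSupport.intro (isCompact_closedBall (0:R3) (2*R))
    intro x hx
    apply η.zero_of_le_dist
    have hx' : 2*R < ‖x‖ := by
      simpa [Metric.mem_closedBall, dist_zero_right] using hx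
    have : dist (R⁻¹ • x) (0:R3) = R⁻¹ * ‖x‖ := by
      rw [dist_zero_right, norm_smul, Real.norm_eq_abs, abs_of_pos (inv_pos.2 hRpos)]
    rw [this]
    show (2:ℝ) ≤ R⁻¹ * ‖x‖
    rw [inv_mul_eq_div, le_div_iff₀ hRpos]
    linarith
  have hφ1 : ∀ y ∈ K, φ y = 1 := by
    intro y hy
    apply η.one_of_mem_closedBall
    have h1 : ‖y‖ ≤ ‖x₀‖ + δ := by
      have : ‖y - x₀‖ < δ := by
        simpa [hK, Metric.mem_ball, dist_eq_norm] using hy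
      calc ‖y‖ = ‖y - x₀ + x₀‖ := by rw [sub_add_cancel]
        _ ≤ ‖y - x₀‖ + ‖x₀‖ := norm_add_le _ _
        _ ≤ ‖x₀‖ + δ := by linarith
    have : dist (R⁻¹ • y) (0:R3) = R⁻¹ * ‖y‖ := by
      rw [dist_zero_right, norm_smul, Real.norm_eq_abs, abs_of_pos (inv_pos.2 hRpos)]
    show R⁻¹ • y ∈ Metric.closedBall (0:R3) η.rIn
    rw [Metric.mem_closedBall, this]
    show R⁻¹ * ‖y‖ ≤ 1
    rw [inv_mul_eq_div, div_le_one hRpos]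
    linarith
  have hφ0 : ∀ y, 0 ≤ φ y := fun y => η.nonneg
  have hφle1 : ∀ y, φ y ≤ 1 := fun y => η.le_one
  -- the integral A
  set A : ℝ := ∫ x, lap' w x * φ x with hA
  have hgint : Integrable (fun x => lap' w x * φ x) volume :=
    (hcont.mul hφC.continuous).integrable_of_hasCompactSupport hφs.mul_left
  -- upper bound: A ≤ -c0
  have hupper : A ≤ -c0 := by
    have hsplit : (∫ x in K, lap' w x * φ x) + (∫ x in Kᶜ, lap' w x * φ x) = A :=
      integral_add_compl Metric.isOpen_ball.measurableSet hgint
    have hcompl : (∫ x in Kᶜ, lap' w x * φ x) ≤ 0 :=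
      setIntegral_nonpos Metric.isOpen_ball.measurableSet.compl
        (fun x _ => mul_nonpos_of_nonpos_of_nonneg (hneg x) (hφ0 x))
    have hKbound : (∫ x in K, lap' w x * φ x) ≤ ∫ x in K, (-(ε/2)) := by
      apply setIntegral_mono_on hgint.integrableOn (integrableOn_const measure_ball_lt_top.ne)
        Metric.isOpen_ball.measurableSet
      · intro x hx
        rw [hφ1 x hx, mul_one]
        exact le_of_lt (hballs hx)
    have hKconst : (∫ x in K, (-(ε/2)) : ℝ) = volK * (-(ε/2)) := by
      rw [setIntegral_const]; simp [mul_comm]; exact Or.inl rfl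
    have : A ≤ volK * (-(ε/2)) := by
      rw [← hsplit]
      have := hKbound.trans_eq hKconst
      linarith
    calc A ≤ volK * (-(ε/2)) := this
      _ = -c0 := by rw [hc0]; ring
  -- lower bound via IBP and Cauchy-Schwarz
  have hibp : ∫ x, w x * lap' φ x = A := ibp hw hφC hφs
  have hlapφ : ∀ x, lap' φ x = (R⁻¹)^2 * lap' (⇑η) (R⁻¹ • x) :=
    fun x => lap'_comp_smul hηC R⁻¹ x
  -- ∫ (lap' φ)^2 = Cη / R
  have hsq : ∫ x, (lap' φ x)^2 = Cη / R := by
    have h1 : ∀ x, (lap' φ x)^2 = (R⁻¹)^4 * (fun y => (lap' (⇑η) y)^2) (R⁻¹ • x) := by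
      intro x; rw [hlapφ x]; ring
    rw [integral_congr_ae (ae_of_all _ h1), integral_const_mul,
      Measure.integral_comp_smul volume (fun y => (lap' (⇑η) y)^2) R⁻¹]
    rw [finrank_euclideanSpace_fin]
    rw [show |((R⁻¹ ^ 3)⁻¹ : ℝ)| = R^3 by
      rw [abs_of_pos (by positivity)]; field_simp]
    rw [smul_eq_mul, ← hCη]
    field_simp
  -- Cauchy-Schwarz
  have habs : |A| ≤ Sw ^ ((1:ℝ)/2) * (Cη / R) ^ ((1:ℝ)/2) := by
    have h0 : |A| ≤ ∫ x, ‖w x‖ * ‖lap' φ x‖ := by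
      rw [← hibp]
      calc |∫ x, w x * lap' φ x| ≤ ∫ x, ‖w x * lap' φ x‖ := by
            rw [← Real.norm_eq_abs]
            exact norm_integral_le_integral_norm _
        _ = ∫ x, ‖w x‖ * ‖lap' φ x‖ := by
            apply integral_congr_ae; filter_upwards with x; exact norm_mul _ _
    have hpq : (2:ℝ).HolderConjugate 2 := Real.HolderConjugate.two_two
    have hwm : MemLp w (ENNReal.ofReal 2) volume := by
      rw [show ENNReal.ofReal 2 = 2 by simp [ENNReal.ofReal_ofNat]]; exact hw2
    have hgm : MemLp (lap' φ) (ENNReal.ofReal 2) volume := by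
      rw [show ENNReal.ofReal 2 = 2 by simp [ENNReal.ofReal_ofNat]]
      exact (continuous_lap' hφC).memLp_of_hasCompactSupport (hcs_lap' hφs)
    have hH := integral_mul_norm_le_Lp_mul_Lq hpq hwm hgm
    have e1 : ∫ x, ‖w x‖ ^ (2:ℝ) = Sw := by
      apply integral_congr_ae; filter_upwards with x; exact rpow_two_norm _
    have e2 : ∫ x, ‖lap' φ x‖ ^ (2:ℝ) = Cη / R := by
      rw [← hsq]; apply integral_congr_ae; filter_upwards with x; exact rpow_two_norm _
    rw [e1, e2] at hH
    exact h0.trans hH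
  -- conclude
  have hCR0 : 0 ≤ Cη / R := div_nonneg hCη0 hRpos.le
  have hAc0 : c0 ≤ |A| := by
    rw [abs_of_nonpos (by linarith : A ≤ 0)]; linarith
  have hsq2 : c0^2 ≤ Sw * (Cη / R) := by
    have h1 : c0^2 ≤ |A|^2 := pow_le_pow_left₀ hc0pos.le hAc0 2
    have h2 : |A|^2 ≤ (Sw ^ ((1:ℝ)/2) * (Cη / R) ^ ((1:ℝ)/2))^2 :=
      pow_le_pow_left₀ (abs_nonneg _) habs 2
    have h3 : (Sw ^ ((1:ℝ)/2) * (Cη / R) ^ ((1:ℝ)/2))^2 = Sw * (Cη / R) := by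
      rw [mul_pow, rpow_half_sq hSw0, rpow_half_sq hCR0]
    linarith
  have hfinal : Sw * Cη + 1 ≤ R * c0^2 := by
    rw [div_le_iff₀ (by positivity : (0:ℝ) < c0^2)] at hRbig
    linarith
  have : Sw * (Cη / R) < c0^2 := by
    rw [mul_div_assoc']
    rw [div_lt_iff₀ hRpos]
    nlinarith
  linarith

end SKdV

open SKdV in
/-- **Positivity of the Lagrange multipliers.** If `(u,v) ∈ H¹(ℝ³)²` is a nonnegative `C²`
solution of the Schrödinger–KdV system with `u ≢ 0` and `β > 0`, then `λ₁ > 0` and `λ₂ > 0`. -/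
theorem multipliers_pos (β lam1 lam2 : ℝ) (hβ : 0 < β) (u v : R3 → ℝ)
    (huC : ContDiff ℝ 2 u) (hvC : ContDiff ℝ 2 v)
    (huH : H1 u) (hvH : H1 v)
    (hupos : ∀ x, 0 ≤ u x) (hvpos : ∀ x, 0 ≤ v x) (hune : u ≠ 0)
    (heq1 : ∀ x, -lap u x + lam1 * u x = (u x)^3 + β * u x * v x)
    (heq2 : ∀ x, -lap v x + lam2 * v x = (1/2) * (v x)^2 + (1/2) * β * (u x)^2) :
    0 < lam1 ∧ 0 < lam2 := by
  obtain ⟨-, hu2, -⟩ := huH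
  obtain ⟨-, hv2, -⟩ := hvH
  constructor
  · by_contra h
    push_neg at h
    have hlap : ∀ x, lap' u x ≤ 0 := by
      intro x
      rw [← lap_eq huC]
      have h1 := heq1 x
      nlinarith [hupos x, hvpos x, pow_nonneg (hupos x) 3,
        mul_nonneg (mul_nonneg hβ.le (hupos x)) (hvpos x),
        mul_nonpos_of_nonpos_of_nonneg h (hupos x)]
    have hzero : ∀ x, lap u x = 0 := by
      intro x
      rw [lap_eq huC]
      exact lap'_nonpos_eq_zero huC hu2 hlap x
    apply hune
    funext x
    have h1 := heq1 x
    rw [hzero x] at h1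
    have hu3 : (u x)^3 = 0 := by
      nlinarith [hupos x, hvpos x, pow_nonneg (hupos x) 3,
        mul_nonneg (mul_nonneg hβ.le (hupos x)) (hvpos x),
        mul_nonpos_of_nonpos_of_nonneg h (hupos x)]
    have := pow_eq_zero_iff (n := 3) (by norm_num) |>.1 hu3
    simpa using this
  · by_contra h
    push_neg at h
    have hlap : ∀ x, lap' v x ≤ 0 := by
      intro x
      rw [← lap_eq hvC]
      have h1 := heq2 x
      nlinarith [hupos x, hvpos x, sq_nonneg (u x), sq_nonneg (v x),
        mul_nonpos_of_nonpos_of_nonneg h (hvpos x), mul_nonneg hβ.le (sq_nonneg (u x))]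
    have hzero : ∀ x, lap v x = 0 := by
      intro x
      rw [lap_eq hvC]
      exact lap'_nonpos_eq_zero hvC hv2 hlap x
    apply hune
    funext x
    have h1 := heq2 x
    rw [hzero x] at h1
    have hu2' : (u x)^2 = 0 := by
      nlinarith [hupos x, hvpos x, sq_nonneg (u x), sq_nonneg (v x),
        mul_nonpos_of_nonpos_of_nonneg h (hvpos x), mul_nonneg hβ.le (sq_nonneg (u x))]
    have := pow_eq_zero_iff (n := 2) (by norm_num) |>.1 hu2'
    simpa using this
end
end

section
/- Fix a ≥ 0, b > 0, β > 0. For every (u,v) ∈ H¹(ℝ³)×H¹(ℝ³) with ‖u‖²₂ = a, ‖v‖²₂ = b and P(u,v) = 0, the reduced energy E(u,v) := J(u,v) = (1/6)∫(|∇u|²+|∇v|²) − (1/12)∫v³ − (β/4)∫u²v satisfies E(u,v) ≥ (1/6)(‖∇u‖²₂+‖∇v‖²₂) − (1/12)C₃³b^{3/4}‖∇v‖₂^{3/2} − (β/4)C₄²a^{1/4}b^{1/2}‖∇u‖₂^{3/2}. In particular, J is coercive and bounded below on the set {(u,v) ∈ S(a,b): P(u,v) = 0}. -/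
open MeasureTheory Filter Set
open scoped ENNReal Topology

noncomputable section

/-- `C₃` is a Gagliardo–Nirenberg constant: `‖v‖_{L³} ≤ C₃ ‖∇v‖₂^{1/2} ‖v‖₂^{1/2}`. -/
noncomputable def GN3 (C3 : ℝ) : Prop :=
  ∀ w : R3 → ℝ, H1 w →
    (∫ x, |w x| ^ 3) ^ ((1:ℝ)/3) ≤
      C3 * (∫ x, ‖gradient w x‖ ^ 2) ^ ((1:ℝ)/4) * (∫ x, (w x) ^ 2) ^ ((1:ℝ)/4)

/-- `C₄` is a Gagliardo–Nirenberg constant: `‖u‖_{L⁴} ≤ C₄ ‖∇u‖₂^{3/4} ‖u‖₂^{1/4}`. -/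
noncomputable def GN4 (C4 : ℝ) : Prop :=
  ∀ w : R3 → ℝ, H1 w →
    (∫ x, |w x| ^ 4) ^ ((1:ℝ)/4) ≤
      C4 * (∫ x, ‖gradient w x‖ ^ 2) ^ ((3:ℝ)/8) * (∫ x, (w x) ^ 2) ^ ((1:ℝ)/8)

/-- The Nehari–Pohozaev functional
`P(u,v) = ∫(|∇u|²+|∇v|²) - ¾∫u⁴ - ¼∫v³ - ¾β∫u²v`. -/
noncomputable def P (β : ℝ) (u v : R3 → ℝ) : ℝ :=
  (∫ x, (‖gradient u x‖^2 + ‖gradient v x‖^2))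
    - (3/4) * (∫ x, (u x)^4) - (1/4) * (∫ x, (v x)^3)
    - (3 * β / 4) * (∫ x, (u x)^2 * v x)

namespace CoercAux

/-- smooth truncation -/
def phi (c t : ℝ) : ℝ := t / Real.sqrt (1 + (t/c)^2)

lemma g_pos (c t : ℝ) : 0 < 1 + (t/c)^2 := by positivity
lemma g_one_le (c t : ℝ) : 1 ≤ 1 + (t/c)^2 := by nlinarith [sq_nonneg (t/c)]
lemma sqrt_g_pos (c t : ℝ) : 0 < Real.sqrt (1 + (t/c)^2) := Real.sqrt_pos.2 (g_pos c t)
lemma sqrt_g_one_le (c t : ℝ) : 1 ≤ Real.sqrt (1 + (t/c)^2) :=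
  Real.one_le_sqrt.2 (g_one_le c t)

lemma phi_sq_le_sq (c t : ℝ) : (phi c t)^2 ≤ t^2 := by
  rw [phi, div_pow, Real.sq_sqrt (g_pos c t).le]
  calc t^2 / (1 + (t/c)^2) ≤ t^2 / 1 :=
        div_le_div_of_nonneg_left (sq_nonneg t) one_pos (g_one_le c t)
    _ = t^2 := by ring

lemma phi_abs_le (c t : ℝ) : |phi c t| ≤ |t| := by
  rw [← Real.sqrt_sq_eq_abs, ← Real.sqrt_sq_eq_abs]
  exact Real.sqrt_le_sqrt (phi_sq_le_sq c t)

lemma phi_sq_le_c_sq (c t : ℝ) (hc : 0 < c) : (phi c t)^2 ≤ c^2 := by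
  rw [phi, div_pow, Real.sq_sqrt (g_pos c t).le]
  rw [div_le_iff₀ (g_pos c t)]
  have : c^2 * (t/c)^2 = t^2 := by field_simp
  nlinarith [sq_nonneg c]

/-- the derivative of the truncation -/
def D (c t : ℝ) : ℝ := ((1 + (t/c)^2) * Real.sqrt (1 + (t/c)^2))⁻¹

lemma D_nonneg (c t : ℝ) : 0 ≤ D c t := by
  unfold D; positivity

lemma D_le_one (c t : ℝ) : D c t ≤ 1 := by
  unfold D
  rw [inv_le_one_iff₀]
  right
  nlinarith [sqrt_g_one_le c t, g_one_le c t, sqrt_g_pos c t]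

lemma phi_hasDerivAt (c t : ℝ) : HasDerivAt (phi c) (D c t) t := by
  have h1 : HasDerivAt (fun t : ℝ => t/c) (1/c) t := (hasDerivAt_id t).div_const c
  have hg : HasDerivAt (fun t : ℝ => 1 + (t/c)^2) (2 * (t/c)^(2-1) * (1/c)) t :=
    (h1.pow 2).const_add 1
  have hs' : HasDerivAt (fun t : ℝ => Real.sqrt (1 + (t/c)^2))
      (1 / (2 * Real.sqrt (1 + (t/c)^2)) * (2 * (t/c)^(2-1) * (1/c))) t :=
    (Real.hasDerivAt_sqrt (g_pos c t).ne').comp t hg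
  have hq := (hasDerivAt_id t).div hs' (sqrt_g_pos c t).ne'
  refine (hq : HasDerivAt (phi c) _ t).congr_deriv (Eq.symm ?_)
  rw [D]
  have hsq : Real.sqrt (1 + (t/c)^2) ^ 2 = 1 + (t/c)^2 := Real.sq_sqrt (g_pos c t).le
  have hspos := sqrt_g_pos c t
  generalize hS : Real.sqrt (1 + (t/c)^2) = s at hsq hspos ⊢
  rcases eq_or_ne c 0 with rfl | hc
  · norm_num
    rw [eq_div_iff (by positivity)]
    field_simp
  · have hsq2 : s^2 * c^2 = c^2 + t^2 := by
      field_simp at hsq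
      linarith [hsq]
    norm_num
    field_simp
    ring_nf
    linear_combination (-t^2) * hsq2


lemma phi_tendsto (t : ℝ) : Tendsto (fun n : ℕ => phi ((n:ℝ)+1) t) atTop (𝓝 t) := by
  have h0 : Tendsto (fun n : ℕ => ((n:ℝ)+1)) atTop atTop :=
    tendsto_atTop_add_const_right _ 1 tendsto_natCast_atTop_atTop
  have h1 : Tendsto (fun n : ℕ => t / ((n:ℝ)+1)) atTop (𝓝 0) :=
    Tendsto.div_atTop tendsto_const_nhds h0
  have hc : Continuous fun x : ℝ => Real.sqrt (1 + x^2) := by continuity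
  have hs : Tendsto (fun n : ℕ => Real.sqrt (1 + (t/((n:ℝ)+1))^2)) atTop (𝓝 1) := by
    have := (hc.tendsto 0).comp h1
    simpa [Function.comp_def] using this
  have := Tendsto.div (tendsto_const_nhds : Tendsto (fun _ : ℕ => t) atTop (𝓝 t)) hs one_ne_zero
  simpa [phi, Pi.div_def] using this

lemma norm_gradient_eq (f : R3 → ℝ) (x : R3) : ‖gradient f x‖ = ‖fderiv ℝ f x‖ := by
  rw [gradient]
  exact LinearIsometryEquiv.norm_map _ _

lemma aesm_grad_norm (f : R3 → ℝ) :
    AEStronglyMeasurable (fun x => ‖gradient f x‖) (volume : Measure R3) := by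
  have h : Measurable fun x => gradient f x :=
    (LinearIsometryEquiv.continuous _).measurable.comp (measurable_fderiv ℝ f)
  exact h.norm.aestronglyMeasurable

lemma H1_comp_phi (u : R3 → ℝ) (hu : H1 u) (c : ℝ) :
    H1 (fun x => phi c (u x)) ∧
      ∀ x, ‖gradient (fun x => phi c (u x)) x‖ ≤ ‖gradient u x‖ := by
  have hfd : ∀ x, HasFDerivAt (fun y => phi c (u y)) (D c (u x) • fderiv ℝ u x) x := by
    intro x
    exact (phi_hasDerivAt c (u x)).comp_hasFDerivAt x (hu.1 x).hasFDerivAt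
  have hdiff : Differentiable ℝ (fun x => phi c (u x)) := fun x => (hfd x).differentiableAt
  have hgrad : ∀ x, ‖gradient (fun y => phi c (u y)) x‖ ≤ ‖gradient u x‖ := by
    intro x
    rw [norm_gradient_eq, norm_gradient_eq, (hfd x).fderiv, norm_smul]
    calc ‖D c (u x)‖ * ‖fderiv ℝ u x‖ ≤ 1 * ‖fderiv ℝ u x‖ := by
          gcongr
          rw [Real.norm_eq_abs, abs_of_nonneg (D_nonneg _ _)]
          exact D_le_one _ _
      _ = _ := one_mul _
  refine ⟨⟨hdiff, ?_, ?_⟩, hgrad⟩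
  · exact MemLp.of_le hu.2.1 hdiff.continuous.aestronglyMeasurable
      (Eventually.of_forall fun x => by
        rw [Real.norm_eq_abs, Real.norm_eq_abs]; exact phi_abs_le c (u x))
  · exact MemLp.of_le hu.2.2 (aesm_grad_norm _)
      (Eventually.of_forall fun x => by rw [norm_norm, norm_norm]; exact hgrad x)


lemma integrable_pow4 {C4 : ℝ} (hC4 : 0 < C4) (hGN4 : GN4 C4) (u : R3 → ℝ) (hu : H1 u) :
    Integrable (fun x => (u x)^4) volume := by
  set Tu := ∫ x, ‖gradient u x‖^2 with hTu
  set A := ∫ x, (u x)^2 with hA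
  have hTu_int : Integrable (fun x => ‖gradient u x‖^2) volume := hu.2.2.integrable_sq
  have hA_int : Integrable (fun x => (u x)^2) volume := hu.2.1.integrable_sq
  have hTu0 : 0 ≤ Tu := integral_nonneg fun x => by positivity
  have hA0 : 0 ≤ A := integral_nonneg fun x => by positivity
  set K : ℝ := (C4 * Tu^((3:ℝ)/8) * A^((1:ℝ)/8))^4 with hK
  have key : ∀ n : ℕ, Integrable (fun x => |phi ((n:ℝ)+1) (u x)|^4) volume ∧
      ∫ x, |phi ((n:ℝ)+1) (u x)|^4 ≤ K := by
    intro n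
    set c : ℝ := (n:ℝ)+1 with hc
    have hcpos : 0 < c := by positivity
    obtain ⟨hw, hwgrad⟩ := H1_comp_phi u hu c
    have hwcont : Continuous fun x => phi c (u x) := hw.1.continuous
    have hint : Integrable (fun x => |phi c (u x)|^4) volume := by
      apply Integrable.mono (hA_int.const_mul (c^2)) (hwcont.abs.pow 4).aestronglyMeasurable
      refine Eventually.of_forall fun x => ?_
      have h1 := phi_sq_le_c_sq c (u x) hcpos
      have h2 := phi_sq_le_sq c (u x)
      have h3 : |phi c (u x)|^4 = ((phi c (u x))^2)^2 := by
        rw [← abs_pow, abs_of_nonneg (by positivity : (0:ℝ) ≤ phi c (u x)^4)]; ring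
      simp only [Pi.pow_apply]
      rw [Real.norm_eq_abs, Real.norm_eq_abs,
        abs_of_nonneg (by positivity : (0:ℝ) ≤ |phi c (u x)|^4),
        abs_of_nonneg (by positivity : (0:ℝ) ≤ c^2 * u x^2), h3]
      nlinarith [sq_nonneg (phi c (u x)), sq_nonneg (u x)]
    refine ⟨hint, ?_⟩
    have h0 : (0:ℝ) ≤ ∫ x, |phi c (u x)|^4 := integral_nonneg fun x => by positivity
    have hgn := hGN4 _ hw
    have hTw0 : (0:ℝ) ≤ ∫ x, ‖gradient (fun x => phi c (u x)) x‖^2 :=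
      integral_nonneg fun x => by positivity
    have hAw0 : (0:ℝ) ≤ ∫ x, (phi c (u x))^2 := integral_nonneg fun x => by positivity
    have hTw : ∫ x, ‖gradient (fun x => phi c (u x)) x‖^2 ≤ Tu := by
      apply integral_mono_of_nonneg (Eventually.of_forall fun x => by positivity) hTu_int
      exact Eventually.of_forall fun x =>
        pow_le_pow_left₀ (norm_nonneg _) (hwgrad x) 2
    have hAw : ∫ x, (phi c (u x))^2 ≤ A := by
      apply integral_mono_of_nonneg (Eventually.of_forall fun x => by positivity) hA_int
      exact Eventually.of_forall fun x => phi_sq_le_sq c (u x)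
    have hRHS : C4 * (∫ x, ‖gradient (fun x => phi c (u x)) x‖^2)^((3:ℝ)/8) *
        (∫ x, (phi c (u x))^2)^((1:ℝ)/8) ≤ C4 * Tu^((3:ℝ)/8) * A^((1:ℝ)/8) := by
      gcongr <;> first | exact hTw0 | exact hAw0 | assumption
    have hle := le_trans hgn hRHS
    have hpow := pow_le_pow_left₀ (Real.rpow_nonneg h0 _) hle 4
    calc ∫ x, |phi c (u x)|^4
        = ((∫ x, |phi c (u x)|^4) ^ ((1:ℝ)/4))^(4:ℕ) := by
          rw [← Real.rpow_natCast ((∫ x, |phi c (u x)|^4) ^ ((1:ℝ)/4)) 4,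
            ← Real.rpow_mul h0]
          norm_num
      _ ≤ (C4 * Tu^((3:ℝ)/8) * A^((1:ℝ)/8))^(4:ℕ) := hpow
      _ = K := by rw [hK]
  have hmeas : ∀ n : ℕ, Measurable fun x => ENNReal.ofReal (|phi ((n:ℝ)+1) (u x)|^4) := by
    intro n
    have hphid : Differentiable ℝ (phi ((n:ℝ)+1)) :=
      fun t => (phi_hasDerivAt _ t).differentiableAt
    have hphic : Continuous (phi ((n:ℝ)+1)) := hphid.continuous
    exact ENNReal.measurable_ofReal.comp
      (((hphic.comp hu.1.continuous).abs.pow 4).measurable)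
  have hFatou : ∫⁻ x, ENNReal.ofReal ((u x)^4) ≤ ENNReal.ofReal K := by
    have hlim : ∀ x : R3, Tendsto (fun n : ℕ => ENNReal.ofReal (|phi ((n:ℝ)+1) (u x)|^4))
        atTop (𝓝 (ENNReal.ofReal ((u x)^4))) := by
      intro x
      have h1 : Tendsto (fun n : ℕ => |phi ((n:ℝ)+1) (u x)|^4) atTop (𝓝 (|u x|^4)) :=
        ((phi_tendsto (u x)).abs).pow 4
      have h2 : |u x|^4 = (u x)^4 := by
        rw [← abs_pow, abs_of_nonneg (by positivity)]
      rw [← h2]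
      exact (ENNReal.continuous_ofReal.tendsto _).comp h1
    calc ∫⁻ x, ENNReal.ofReal ((u x)^4)
        = ∫⁻ x, Filter.liminf (fun n : ℕ => ENNReal.ofReal (|phi ((n:ℝ)+1) (u x)|^4)) atTop :=
          lintegral_congr fun x => ((hlim x).liminf_eq).symm
      _ ≤ Filter.liminf (fun n : ℕ => ∫⁻ x, ENNReal.ofReal (|phi ((n:ℝ)+1) (u x)|^4)) atTop :=
          lintegral_liminf_le hmeas
      _ ≤ ENNReal.ofReal K := by
          have hb : ∀ n : ℕ, ∫⁻ x, ENNReal.ofReal (|phi ((n:ℝ)+1) (u x)|^4) ≤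
              ENNReal.ofReal K := by
            intro n
            rw [← ofReal_integral_eq_lintegral_ofReal (key n).1
              (Eventually.of_forall fun x => by positivity)]
            exact ENNReal.ofReal_le_ofReal (key n).2
          calc Filter.liminf (fun n : ℕ => ∫⁻ x, ENNReal.ofReal (|phi ((n:ℝ)+1) (u x)|^4)) atTop
              ≤ Filter.liminf (fun _ : ℕ => ENNReal.ofReal K) atTop :=
                Filter.liminf_le_liminf (Eventually.of_forall hb)
            _ = ENNReal.ofReal K := Filter.liminf_const _
  refine ⟨(hu.1.continuous.pow 4).aestronglyMeasurable, ?_⟩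
  rw [hasFiniteIntegral_iff_ofReal (Eventually.of_forall fun x => by positivity)]
  exact lt_of_le_of_lt hFatou ENNReal.ofReal_lt_top


lemma rpow_cube {x : ℝ} (hx : 0 ≤ x) : (x ^ ((1:ℝ)/3))^(3:ℕ) = x := by
  rw [← Real.rpow_natCast (x ^ ((1:ℝ)/3)) 3, ← Real.rpow_mul hx]
  norm_num

lemma v3_bound {C3 : ℝ} (hC3 : 0 < C3) (hGN3 : GN3 C3) (v : R3 → ℝ) (hv : H1 v) :
    ∫ x, (v x)^3 ≤
      C3^3 * (∫ x, (v x)^2)^((3:ℝ)/4) * (∫ x, ‖gradient v x‖^2)^((3:ℝ)/4) := by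
  set Tv := ∫ x, ‖gradient v x‖^2 with hTv
  set B := ∫ x, (v x)^2 with hB
  have hTv0 : 0 ≤ Tv := integral_nonneg fun x => by positivity
  have hB0 : 0 ≤ B := integral_nonneg fun x => by positivity
  have h1 : ∫ x, (v x)^3 ≤ ∫ x, |v x|^3 := by
    by_cases hi : Integrable (fun x => (v x)^3) volume
    · have habs := hi.abs
      simp only [abs_pow] at habs
      exact integral_mono hi habs fun x => (le_abs_self _).trans_eq (abs_pow _ _)
    · rw [integral_undef hi]
      exact integral_nonneg fun x => by positivity
  have h0 : (0:ℝ) ≤ ∫ x, |v x|^3 := integral_nonneg fun x => by positivity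
  have hgn := hGN3 v hv
  have hcube := pow_le_pow_left₀ (Real.rpow_nonneg h0 _) hgn 3
  rw [rpow_cube h0] at hcube
  calc ∫ x, (v x)^3 ≤ ∫ x, |v x|^3 := h1
    _ ≤ (C3 * Tv^((1:ℝ)/4) * B^((1:ℝ)/4))^(3:ℕ) := hcube
    _ = C3^3 * B^((3:ℝ)/4) * Tv^((3:ℝ)/4) := by
        rw [mul_pow, mul_pow,
          ← Real.rpow_natCast (Tv ^ ((1:ℝ)/4)) 3, ← Real.rpow_mul hTv0,
          ← Real.rpow_natCast (B ^ ((1:ℝ)/4)) 3, ← Real.rpow_mul hB0]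
        norm_num
        ring

lemma cross_bound {C4 : ℝ} (hC4 : 0 < C4) (hGN4 : GN4 C4) (u v : R3 → ℝ)
    (hu : H1 u) (hv : H1 v) :
    ∫ x, (u x)^2 * v x ≤
      C4^2 * (∫ x, (u x)^2)^((1:ℝ)/4) * (∫ x, (v x)^2)^((1:ℝ)/2) *
        (∫ x, ‖gradient u x‖^2)^((3:ℝ)/4) := by
  set Tu := ∫ x, ‖gradient u x‖^2 with hTu
  set A := ∫ x, (u x)^2 with hA
  set B := ∫ x, (v x)^2 with hB
  have hTu0 : 0 ≤ Tu := integral_nonneg fun x => by positivity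
  have hA0 : 0 ≤ A := integral_nonneg fun x => by positivity
  have hB0 : 0 ≤ B := integral_nonneg fun x => by positivity
  have hint4 := integrable_pow4 hC4 hGN4 u hu
  have husq : MemLp (fun x => (u x)^2) 2 volume := by
    rw [memLp_two_iff_integrable_sq (f := fun x => (u x)^2) (μ := volume) ((hu.1.continuous.pow 2).aestronglyMeasurable)]
    have : (fun x => ((u x)^2)^2) = fun x => (u x)^4 := funext fun x => by ring
    rw [this]
    exact hint4
  have hvabs : MemLp (fun x => |v x|) 2 volume := by
    simpa [Real.norm_eq_abs] using hv.2.1.norm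
  have hmulint : Integrable (fun x => (u x)^2 * v x) volume := by
    have hsmul : MemLp ((fun x => u x ^ 2) • v) 1 volume := hv.2.1.smul husq
    rw [← memLp_one_iff_integrable]
    exact hsmul
  have hmulabsint : Integrable (fun x => (u x)^2 * |v x|) volume := by
    have habs := hmulint.abs
    simp only [abs_mul, abs_pow, sq_abs] at habs
    exact habs
  have step1 : ∫ x, (u x)^2 * v x ≤ ∫ x, (u x)^2 * |v x| :=
    integral_mono hmulint hmulabsint fun x =>
      mul_le_mul_of_nonneg_left (le_abs_self _) (sq_nonneg _)
  have hconj : Real.HolderConjugate 2 2 := Real.HolderConjugate.two_two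
  have h2e : ENNReal.ofReal (2:ℝ) = 2 := by norm_num
  have step2 := integral_mul_le_Lp_mul_Lq_of_nonneg (μ := volume) hconj
    (f := fun x => (u x)^2) (g := fun x => |v x|)
    (Eventually.of_forall fun x => sq_nonneg _)
    (Eventually.of_forall fun x => abs_nonneg _)
    (by rw [h2e]; exact husq) (by rw [h2e]; exact hvabs)
  have e1 : ∀ y : ℝ, y ^ (2:ℝ) = y^2 := fun y => Real.rpow_two y
  simp only [e1, sq_abs] at step2
  have e2 : (fun x => ((u x)^2)^2) = fun x => (u x)^4 := funext fun x => by ring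
  rw [e2] at step2
  -- now step2 : ∫ u²|v| ≤ (∫ u⁴)^(1/2) * B^(1/2)
  have hI0 : (0:ℝ) ≤ ∫ x, (u x)^4 := integral_nonneg fun x => by positivity
  have hgn := hGN4 u hu
  have habs4 : (fun x => |u x|^4) = fun x => (u x)^4 := funext fun x => by
    rw [← abs_pow, abs_of_nonneg (by positivity : (0:ℝ) ≤ (u x)^4)]
  rw [habs4] at hgn
  have hsq := pow_le_pow_left₀ (Real.rpow_nonneg hI0 _) hgn 2
  have hLHS : ((∫ x, (u x)^4) ^ ((1:ℝ)/4))^(2:ℕ) = (∫ x, (u x)^4) ^ ((1:ℝ)/2) := by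
    rw [← Real.rpow_natCast ((∫ x, (u x)^4) ^ ((1:ℝ)/4)) 2, ← Real.rpow_mul hI0]
    norm_num
  have hRHS : (C4 * Tu^((3:ℝ)/8) * A^((1:ℝ)/8))^(2:ℕ) =
      C4^2 * Tu^((3:ℝ)/4) * A^((1:ℝ)/4) := by
    rw [mul_pow, mul_pow,
      ← Real.rpow_natCast (Tu ^ ((3:ℝ)/8)) 2, ← Real.rpow_mul hTu0,
      ← Real.rpow_natCast (A ^ ((1:ℝ)/8)) 2, ← Real.rpow_mul hA0]
    norm_num
  rw [hLHS, hRHS] at hsq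
  calc ∫ x, (u x)^2 * v x ≤ ∫ x, (u x)^2 * |v x| := step1
    _ ≤ (∫ x, (u x)^4) ^ ((1:ℝ)/2) * B ^ ((1:ℝ)/2) := step2
    _ ≤ (C4^2 * Tu^((3:ℝ)/4) * A^((1:ℝ)/4)) * B ^ ((1:ℝ)/2) :=
        mul_le_mul_of_nonneg_right hsq (Real.rpow_nonneg hB0 _)
    _ = C4^2 * A^((1:ℝ)/4) * B^((1:ℝ)/2) * Tu^((3:ℝ)/4) := by ring


lemma young_34 {t lam : ℝ} (ht : 0 ≤ t) (hl : 0 < lam) :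
    t ^ ((3:ℝ)/4) ≤ lam * t + (lam⁻¹)^3 := by
  rcases le_or_gt t ((lam⁻¹)^4) with h | h
  · have h1 : t ^ ((3:ℝ)/4) ≤ ((lam⁻¹)^4 : ℝ) ^ ((3:ℝ)/4) :=
      Real.rpow_le_rpow ht h (by norm_num)
    have h2 : ((lam⁻¹)^4 : ℝ) ^ ((3:ℝ)/4) = (lam⁻¹)^3 := by
      rw [← Real.rpow_natCast lam⁻¹ 4, ← Real.rpow_mul (by positivity),
        ← Real.rpow_natCast lam⁻¹ 3]
      norm_num
    nlinarith [mul_nonneg hl.le ht]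
  · have ht' : 0 < t := lt_of_le_of_lt (by positivity) h
    have h14 : lam⁻¹ ≤ t ^ ((1:ℝ)/4) := by
      have h3 := Real.rpow_le_rpow (by positivity : (0:ℝ) ≤ (lam⁻¹)^4) h.le
        (by norm_num : (0:ℝ) ≤ 1/4)
      rwa [← Real.rpow_natCast lam⁻¹ 4, ← Real.rpow_mul (by positivity),
        (by norm_num : ((4:ℕ):ℝ) * (1/4) = 1), Real.rpow_one] at h3
    have key : (1:ℝ) ≤ lam * t ^ ((1:ℝ)/4) :=
      calc (1:ℝ) = lam * lam⁻¹ := (mul_inv_cancel₀ hl.ne').symm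
        _ ≤ lam * t ^ ((1:ℝ)/4) := mul_le_mul_of_nonneg_left h14 hl.le
    have hsplit : t ^ ((3:ℝ)/4) * t ^ ((1:ℝ)/4) = t := by
      rw [← Real.rpow_add ht']; norm_num
    have hfin : t ^ ((3:ℝ)/4) ≤ lam * t := by
      calc t ^ ((3:ℝ)/4) = t ^ ((3:ℝ)/4) * 1 := (mul_one _).symm
        _ ≤ t ^ ((3:ℝ)/4) * (lam * t ^ ((1:ℝ)/4)) :=
            mul_le_mul_of_nonneg_left key (Real.rpow_nonneg ht _)
        _ = lam * (t ^ ((3:ℝ)/4) * t ^ ((1:ℝ)/4)) := by ring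
        _ = lam * t := by rw [hsplit]
    nlinarith [pow_nonneg (inv_nonneg.2 hl.le) 3]

end CoercAux

/-- **Coercivity on the Nehari–Pohozaev set.** On `{(u,v) ∈ S(a,b) : P(u,v) = 0}` the energy
reduces to `J = (1/6)∫(|∇u|²+|∇v|²) - (1/12)∫v³ - (β/4)∫u²v`, is bounded below by the explicit
Gagliardo–Nirenberg expression, and in particular `J` is bounded from below on this set. -/
theorem coercive_on_pohozaev (β a b C3 C4 : ℝ) (hβ : 0 < β) (ha : 0 ≤ a) (hb : 0 < b)
    (hC3 : 0 < C3) (hC4 : 0 < C4) (hGN3 : GN3 C3) (hGN4 : GN4 C4) :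
    (∀ u v : R3 → ℝ, H1 u → H1 v →
      (∫ x, (u x)^2) = a → (∫ x, (v x)^2) = b → P β u v = 0 →
      J β u v = (1/6) * (∫ x, (‖gradient u x‖^2 + ‖gradient v x‖^2))
          - (1/12) * (∫ x, (v x)^3) - (β/4) * (∫ x, (u x)^2 * v x)
      ∧ J β u v ≥ (1/6) * (∫ x, (‖gradient u x‖^2 + ‖gradient v x‖^2))
          - (1/12) * C3^3 * b ^ ((3:ℝ)/4) * (∫ x, ‖gradient v x‖^2) ^ ((3:ℝ)/4)
          - (β/4) * C4^2 * a ^ ((1:ℝ)/4) * b ^ ((1:ℝ)/2) *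
              (∫ x, ‖gradient u x‖^2) ^ ((3:ℝ)/4))
    ∧ ∃ M : ℝ, ∀ u v : R3 → ℝ, H1 u → H1 v →
        (∫ x, (u x)^2) = a → (∫ x, (v x)^2) = b → P β u v = 0 → M ≤ J β u v := by

  have main : ∀ u v : R3 → ℝ, H1 u → H1 v →
      (∫ x, (u x)^2) = a → (∫ x, (v x)^2) = b → P β u v = 0 →
      J β u v = (1/6) * (∫ x, (‖gradient u x‖^2 + ‖gradient v x‖^2))
          - (1/12) * (∫ x, (v x)^3) - (β/4) * (∫ x, (u x)^2 * v x)
      ∧ J β u v ≥ (1/6) * (∫ x, (‖gradient u x‖^2 + ‖gradient v x‖^2))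
          - (1/12) * C3^3 * b ^ ((3:ℝ)/4) * (∫ x, ‖gradient v x‖^2) ^ ((3:ℝ)/4)
          - (β/4) * C4^2 * a ^ ((1:ℝ)/4) * b ^ ((1:ℝ)/2) *
              (∫ x, ‖gradient u x‖^2) ^ ((3:ℝ)/4) := by
    intro u v hu hv hua hvb hP
    have hv3 := CoercAux.v3_bound hC3 hGN3 v hv
    have hcross := CoercAux.cross_bound hC4 hGN4 u v hu hv
    rw [hvb] at hv3
    rw [hua, hvb] at hcross
    have heq : J β u v = (1/6) * (∫ x, (‖gradient u x‖^2 + ‖gradient v x‖^2))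
        - (1/12) * (∫ x, (v x)^3) - (β/4) * (∫ x, (u x)^2 * v x) := by
      unfold P at hP
      unfold J
      linarith
    refine ⟨heq, ?_⟩
    rw [ge_iff_le, heq]
    have h1 := mul_le_mul_of_nonneg_left hv3 (by norm_num : (0:ℝ) ≤ 1/12)
    have h2 := mul_le_mul_of_nonneg_left hcross
      (by positivity : (0:ℝ) ≤ β/4)
    linarith
  refine ⟨main, ?_⟩
  set c1 : ℝ := (1/12) * C3^3 * b ^ ((3:ℝ)/4) with hc1
  set c2 : ℝ := (β/4) * C4^2 * a ^ ((1:ℝ)/4) * b ^ ((1:ℝ)/2) with hc2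
  have hc10 : 0 ≤ c1 := by rw [hc1]; positivity
  have hc20 : 0 ≤ c2 := by rw [hc2]; positivity
  set lam : ℝ := (6*(c1+c2+1))⁻¹ with hlam
  have hlampos : 0 < lam := by rw [hlam]; positivity
  refine ⟨-((c1+c2) * (lam⁻¹)^3), ?_⟩
  intro u v hu hv hua hvb hP
  obtain ⟨heq, hge⟩ := main u v hu hv hua hvb hP
  have hTu0 : (0:ℝ) ≤ ∫ x, ‖gradient u x‖^2 := integral_nonneg fun x => by positivity
  have hTv0 : (0:ℝ) ≤ ∫ x, ‖gradient v x‖^2 := integral_nonneg fun x => by positivity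
  have hsum : (∫ x, (‖gradient u x‖^2 + ‖gradient v x‖^2)) =
      (∫ x, ‖gradient u x‖^2) + (∫ x, ‖gradient v x‖^2) :=
    integral_add hu.2.2.integrable_sq hv.2.2.integrable_sq
  have hyu := CoercAux.young_34 hTu0 hlampos
  have hyv := CoercAux.young_34 hTv0 hlampos
  have hposd : (0:ℝ) < c1 + c2 + 1 := by linarith
  have hlamval : (c1 + c2 + 1) * lam = 1/6 := by
    rw [hlam]
    field_simp
  have hkey1 : c1 * lam * (∫ x, ‖gradient v x‖^2) ≤ (1/6) * (∫ x, ‖gradient v x‖^2) := by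
    apply mul_le_mul_of_nonneg_right ?_ hTv0
    calc c1 * lam ≤ (c1+c2+1) * lam :=
          mul_le_mul_of_nonneg_right (by linarith) hlampos.le
      _ = 1/6 := hlamval
  have hkey2 : c2 * lam * (∫ x, ‖gradient u x‖^2) ≤ (1/6) * (∫ x, ‖gradient u x‖^2) := by
    apply mul_le_mul_of_nonneg_right ?_ hTu0
    calc c2 * lam ≤ (c1+c2+1) * lam :=
          mul_le_mul_of_nonneg_right (by linarith) hlampos.le
      _ = 1/6 := hlamval
  have e1 : c1 * (∫ x, ‖gradient v x‖^2) ^ ((3:ℝ)/4) ≤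
      (1/6) * (∫ x, ‖gradient v x‖^2) + c1*(lam⁻¹)^3 := by
    have := mul_le_mul_of_nonneg_left hyv hc10
    linarith [hkey1]
  have e2 : c2 * (∫ x, ‖gradient u x‖^2) ^ ((3:ℝ)/4) ≤
      (1/6) * (∫ x, ‖gradient u x‖^2) + c2*(lam⁻¹)^3 := by
    have := mul_le_mul_of_nonneg_left hyu hc20
    linarith [hkey2]
  rw [hsum] at hge
  linarith [hge, e1, e2]
end
end

section
/- Let u₁, u₂, v₁, v₂ ≥ 0 be Borel measurable functions on ℝᴺ vanishing at infinity. Then ∫_{ℝᴺ}(u₁u₂ + v₁v₂) dx ≤ ∫_{ℝᴺ} {u₁,v₁}* {u₂,v₂}* dx. -/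
open MeasureTheory
open scoped ENNReal

noncomputable section

/-- A Borel function `u` vanishes at infinity if all its superlevel sets at positive levels
have finite measure. -/
def VanishAtInfinity {N : ℕ} (u : EuclideanSpace ℝ (Fin N) → ℝ) : Prop :=
  ∀ t : ℝ, 0 < t → volume {x | t < |u x|} < ⊤

/-- `A*(u,v;t)`: the open ball centered at the origin whose measure equals
`|{|u| > t}| + |{|v| > t}|`. -/
def jointSet {N : ℕ} (u v : EuclideanSpace ℝ (Fin N) → ℝ) (t : ℝ) :
    Set (EuclideanSpace ℝ (Fin N)) :=
  {x | volume (Metric.ball (0 : EuclideanSpace ℝ (Fin N)) ‖x‖) <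
        volume {y | t < |u y|} + volume {y | t < |v y|}}

/-- The joint symmetric decreasing rearrangement
`{u,v}*(x) = ∫₀^∞ χ_{A*(u,v;t)}(x) dt` (with values in `[0,∞]`). -/
def jointRearr {N : ℕ} (u v : EuclideanSpace ℝ (Fin N) → ℝ)
    (x : EuclideanSpace ℝ (Fin N)) : ℝ≥0∞ :=
  ∫⁻ t in Set.Ioi (0:ℝ), (jointSet u v t).indicator (fun _ => (1:ℝ≥0∞)) x

namespace JRAux

variable {N : ℕ}

abbrev E (N : ℕ) := EuclideanSpace ℝ (Fin N)

def phi (N : ℕ) (x : E N) : ℝ≥0∞ := volume (Metric.ball (0 : E N) ‖x‖)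

lemma nontriv (hN : 1 ≤ N) : Nontrivial (E N) := by
  have : Nonempty (Fin N) := ⟨⟨0, hN⟩⟩
  exact ⟨0, EuclideanSpace.single ⟨0, hN⟩ (1:ℝ), by
    intro h
    have := congrArg (fun v : E N => v ⟨0, hN⟩) h.symm
    simp [EuclideanSpace.single] at this⟩

lemma phi_eq (hN : 1 ≤ N) (x : E N) :
    phi N x = ENNReal.ofReal (‖x‖ ^ N) * volume (Metric.ball (0 : E N) 1) := by
  haveI := nontriv hN
  rw [phi, Measure.addHaar_ball volume 0 (norm_nonneg x), finrank_euclideanSpace_fin]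

lemma measurable_phi (hN : 1 ≤ N) : Measurable (phi N) := by
  have h : phi N = fun x => ENNReal.ofReal (‖x‖ ^ N) * volume (Metric.ball (0 : E N) 1) :=
    funext (phi_eq hN)
  rw [h]
  exact ((measurable_norm.pow_const N).ennreal_ofReal).mul_const _

lemma ball_lemma (hN : 1 ≤ N) {μ : ℝ≥0∞} (hμ : μ ≠ ⊤) :
    MeasurableSet {x : E N | phi N x < μ} ∧ volume {x : E N | phi N x < μ} = μ := by
  set c := volume (Metric.ball (0 : E N) 1) with hc
  have hc0 : c ≠ 0 := (Metric.measure_ball_pos volume 0 one_pos).ne'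
  have hct : c ≠ ⊤ := measure_ball_lt_top.ne
  have hdivt : μ / c ≠ ⊤ := (ENNReal.div_lt_top hμ hc0).ne
  set a := (μ / c).toReal with ha
  have ha0 : 0 ≤ a := ENNReal.toReal_nonneg
  set r := a ^ ((N : ℝ)⁻¹) with hr
  have hr0 : 0 ≤ r := Real.rpow_nonneg ha0 _
  have hrN : r ^ N = a := Real.rpow_inv_natCast_pow ha0 (by omega)
  have hset : {x : E N | phi N x < μ} = Metric.ball 0 r := by
    ext x
    simp only [Set.mem_setOf_eq, Metric.mem_ball, dist_zero_right]
    rw [phi_eq hN, ← hc]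
    rw [← ENNReal.lt_div_iff_mul_lt (Or.inl hc0) (Or.inl hct)]
    rw [ENNReal.ofReal_lt_iff_lt_toReal (by positivity) hdivt, ← ha, ← hrN]
    exact pow_lt_pow_iff_left₀ (norm_nonneg x) hr0 (by omega)
  constructor
  · rw [hset]; exact Metric.isOpen_ball.measurableSet
  · rw [hset]
    haveI := nontriv hN
    rw [Measure.addHaar_ball volume 0 hr0, finrank_euclideanSpace_fin, hrN, ← hc, ha,
      ENNReal.ofReal_toReal hdivt]
    exact ENNReal.div_mul_cancel hc0 hct

end JRAux

open JRAux

/-- **Riesz-type inequality for the joint rearrangement:** for nonnegative Borel functions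
vanishing at infinity, `∫ (u₁u₂ + v₁v₂) ≤ ∫ {u₁,v₁}* {u₂,v₂}*`. -/
theorem jointRearr_riesz (N : ℕ) (hN : 1 ≤ N)
    (u1 u2 v1 v2 : EuclideanSpace ℝ (Fin N) → ℝ)
    (hu1 : Measurable u1) (hu2 : Measurable u2) (hv1 : Measurable v1) (hv2 : Measurable v2)
    (hu1p : ∀ x, 0 ≤ u1 x) (hu2p : ∀ x, 0 ≤ u2 x)
    (hv1p : ∀ x, 0 ≤ v1 x) (hv2p : ∀ x, 0 ≤ v2 x)
    (h1 : VanishAtInfinity u1) (h2 : VanishAtInfinity u2)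
    (h3 : VanishAtInfinity v1) (h4 : VanishAtInfinity v2) :
    ∫⁻ x, ENNReal.ofReal (u1 x * u2 x + v1 x * v2 x) ≤
      ∫⁻ x, jointRearr u1 v1 x * jointRearr u2 v2 x := by
  classical
  set μ2 : Measure (ℝ × ℝ) :=
    (volume.restrict (Set.Ioi (0:ℝ))).prod (volume.restrict (Set.Ioi (0:ℝ))) with hμ2
  set m1 : ℝ → ℝ≥0∞ := fun s => volume {y : E N | s < |u1 y|} + volume {y : E N | s < |v1 y|}
    with hm1def
  set m2 : ℝ → ℝ≥0∞ := fun s => volume {y : E N | s < |u2 y|} + volume {y : E N | s < |v2 y|}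
    with hm2def
  have ham1 : Antitone m1 := fun s t hst => by
    exact add_le_add (measure_mono fun y hy => lt_of_le_of_lt hst hy)
      (measure_mono fun y hy => lt_of_le_of_lt hst hy)
  have ham2 : Antitone m2 := fun s t hst => by
    exact add_le_add (measure_mono fun y hy => lt_of_le_of_lt hst hy)
      (measure_mono fun y hy => lt_of_le_of_lt hst hy)
  have hm1 : Measurable m1 := ham1.measurable
  have hm2 : Measurable m2 := ham2.measurable
  -- sets for the LHS
  set S1 : Set (E N × (ℝ × ℝ)) := {z | z.2.1 < u1 z.1 ∧ z.2.2 < u2 z.1} with hS1def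
  set S2 : Set (E N × (ℝ × ℝ)) := {z | z.2.1 < v1 z.1 ∧ z.2.2 < v2 z.1} with hS2def
  have hS1 : MeasurableSet S1 :=
    (measurableSet_lt measurable_snd.fst (hu1.comp measurable_fst)).inter
      (measurableSet_lt measurable_snd.snd (hu2.comp measurable_fst))
  have hS2 : MeasurableSet S2 :=
    (measurableSet_lt measurable_snd.fst (hv1.comp measurable_fst)).inter
      (measurableSet_lt measurable_snd.snd (hv2.comp measurable_fst))
  set g : E N × (ℝ × ℝ) → ℝ≥0∞ :=
    fun z => S1.indicator (fun _ => (1:ℝ≥0∞)) z + S2.indicator (fun _ => (1:ℝ≥0∞)) z with hgdef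
  have hg : Measurable g :=
    ((measurable_const.indicator hS1).add (measurable_const.indicator hS2))
  -- sets for the RHS
  set T1 : Set (E N × (ℝ × ℝ)) := {z | phi N z.1 < m1 z.2.1} with hT1def
  set T2 : Set (E N × (ℝ × ℝ)) := {z | phi N z.1 < m2 z.2.2} with hT2def
  have hT1 : MeasurableSet T1 :=
    measurableSet_lt ((measurable_phi hN).comp measurable_fst) (hm1.comp measurable_snd.fst)
  have hT2 : MeasurableSet T2 :=
    measurableSet_lt ((measurable_phi hN).comp measurable_fst) (hm2.comp measurable_snd.snd)
  set h : E N × (ℝ × ℝ) → ℝ≥0∞ :=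
    fun z => T1.indicator (fun _ => (1:ℝ≥0∞)) z * T2.indicator (fun _ => (1:ℝ≥0∞)) z with hhdef
  have hh : Measurable h :=
    ((measurable_const.indicator hT1).mul (measurable_const.indicator hT2))
  -- Step A: pointwise layer-cake for the LHS
  have stepA : ∀ x : E N, ENNReal.ofReal (u1 x * u2 x + v1 x * v2 x)
      = ∫⁻ p, g (x, p) ∂μ2 := by
    intro x
    have hrect : ∀ (a b : ℝ), 0 ≤ a → 0 ≤ b →
        ∫⁻ p, (Set.Iio a ×ˢ Set.Iio b).indicator (fun _ => (1:ℝ≥0∞)) p ∂μ2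
          = ENNReal.ofReal (a * b) := by
      intro a b ha hb
      rw [lintegral_indicator (measurableSet_Iio.prod measurableSet_Iio) _]
      simp only [lintegral_one, Measure.restrict_apply MeasurableSet.univ, Set.univ_inter]
      rw [hμ2, Measure.prod_prod, Measure.restrict_apply measurableSet_Iio,
        Measure.restrict_apply measurableSet_Iio, Set.Iio_inter_Ioi, Set.Iio_inter_Ioi,
        Real.volume_Ioo, Real.volume_Ioo, sub_zero, sub_zero, ← ENNReal.ofReal_mul ha]
    have e1 : (fun p : ℝ × ℝ => S1.indicator (fun _ => (1:ℝ≥0∞)) (x, p))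
        = (Set.Iio (u1 x) ×ˢ Set.Iio (u2 x)).indicator (fun _ => (1:ℝ≥0∞)) := by
      funext p
      simp [Set.indicator_apply, hS1def, Set.mem_prod]
    have e2 : (fun p : ℝ × ℝ => S2.indicator (fun _ => (1:ℝ≥0∞)) (x, p))
        = (Set.Iio (v1 x) ×ˢ Set.Iio (v2 x)).indicator (fun _ => (1:ℝ≥0∞)) := by
      funext p
      simp [Set.indicator_apply, hS2def, Set.mem_prod]
    calc ENNReal.ofReal (u1 x * u2 x + v1 x * v2 x)
        = ENNReal.ofReal (u1 x * u2 x) + ENNReal.ofReal (v1 x * v2 x) :=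
          ENNReal.ofReal_add (mul_nonneg (hu1p x) (hu2p x)) (mul_nonneg (hv1p x) (hv2p x))
      _ = (∫⁻ p, (Set.Iio (u1 x) ×ˢ Set.Iio (u2 x)).indicator (fun _ => (1:ℝ≥0∞)) p ∂μ2)
          + ∫⁻ p, (Set.Iio (v1 x) ×ˢ Set.Iio (v2 x)).indicator (fun _ => (1:ℝ≥0∞)) p ∂μ2 := by
          rw [hrect _ _ (hu1p x) (hu2p x), hrect _ _ (hv1p x) (hv2p x)]
      _ = ∫⁻ p, g (x, p) ∂μ2 := by
          rw [hgdef]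
          rw [← lintegral_add_left ((measurable_const.indicator
            (measurableSet_Iio.prod measurableSet_Iio)))]
          simp only [← e1, ← e2]
  -- Step E: pointwise product formula for the RHS
  have stepE : ∀ x : E N, jointRearr u1 v1 x * jointRearr u2 v2 x
      = ∫⁻ p, h (x, p) ∂μ2 := by
    intro x
    have f1 : (fun s : ℝ => (jointSet u1 v1 s).indicator (fun _ => (1:ℝ≥0∞)) x)
        = fun s => {s : ℝ | phi N x < m1 s}.indicator (fun _ => (1:ℝ≥0∞)) s := by
      funext s
      by_cases hx : phi N x < m1 s <;>
        simp [Set.indicator_apply, jointSet, phi, hm1def, Set.mem_setOf_eq] at hx ⊢ <;>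
        simp [hx]
    have f2 : (fun s : ℝ => (jointSet u2 v2 s).indicator (fun _ => (1:ℝ≥0∞)) x)
        = fun s => {s : ℝ | phi N x < m2 s}.indicator (fun _ => (1:ℝ≥0∞)) s := by
      funext s
      by_cases hx : phi N x < m2 s <;>
        simp [Set.indicator_apply, jointSet, phi, hm2def, Set.mem_setOf_eq] at hx ⊢ <;>
        simp [hx]
    have hmeas1 : Measurable fun s : ℝ => {s : ℝ | phi N x < m1 s}.indicator
        (fun _ => (1:ℝ≥0∞)) s :=
      measurable_const.indicator (measurableSet_lt measurable_const hm1)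
    have hmeas2 : Measurable fun s : ℝ => {s : ℝ | phi N x < m2 s}.indicator
        (fun _ => (1:ℝ≥0∞)) s :=
      measurable_const.indicator (measurableSet_lt measurable_const hm2)
    rw [jointRearr, jointRearr, f1, f2, hμ2,
      ← lintegral_prod_mul hmeas1.aemeasurable hmeas2.aemeasurable]
    rfl
  -- rewrite both sides and swap
  rw [funext stepA, funext stepE]
  have swap1 : (∫⁻ x : E N, ∫⁻ p, g (x, p) ∂μ2) = ∫⁻ p, (∫⁻ x : E N, g (x, p)) ∂μ2 :=
    lintegral_lintegral_swap hg.aemeasurable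
  have swap2 : (∫⁻ x : E N, ∫⁻ p, h (x, p) ∂μ2) = ∫⁻ p, (∫⁻ x : E N, h (x, p)) ∂μ2 :=
    lintegral_lintegral_swap hh.aemeasurable
  rw [swap1, swap2]
  -- compare the inner integrals a.e.
  apply lintegral_mono_ae
  have hae : ∀ᵐ p ∂μ2, p ∈ (Set.Ioi (0:ℝ)) ×ˢ (Set.Ioi (0:ℝ)) := by
    rw [hμ2, Measure.prod_restrict]
    exact ae_restrict_mem (measurableSet_Ioi.prod measurableSet_Ioi)
  filter_upwards [hae] with p hp
  obtain ⟨hs, ht⟩ := hp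
  set s := p.1
  set t := p.2
  -- the inner LHS integral
  have hA : MeasurableSet {x : E N | s < u1 x ∧ t < u2 x} :=
    (measurableSet_lt measurable_const hu1).inter (measurableSet_lt measurable_const hu2)
  have hB : MeasurableSet {x : E N | s < v1 x ∧ t < v2 x} :=
    (measurableSet_lt measurable_const hv1).inter (measurableSet_lt measurable_const hv2)
  have lhs_eq : ∫⁻ x, g (x, p)
      = volume {x : E N | s < u1 x ∧ t < u2 x} + volume {x : E N | s < v1 x ∧ t < v2 x} := by
    have e1 : (fun x : E N => g (x, p))
        = fun x => {x : E N | s < u1 x ∧ t < u2 x}.indicator (fun _ => (1:ℝ≥0∞)) x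
            + {x : E N | s < v1 x ∧ t < v2 x}.indicator (fun _ => (1:ℝ≥0∞)) x := by
      funext x
      simp [hgdef, Set.indicator_apply, hS1def, hS2def]
      rfl
    rw [e1, lintegral_add_left (measurable_const.indicator hA),
      lintegral_indicator hA _, lintegral_indicator hB _]
    simp
  -- the inner RHS integral
  have hmintop : min (m1 s) (m2 t) ≠ ⊤ := by
    refine ne_top_of_le_ne_top ?_ (min_le_left _ _)
    exact (ENNReal.add_lt_top.2 ⟨h1 s hs, h3 s hs⟩).ne
  obtain ⟨hmeasI, hvolI⟩ := ball_lemma hN hmintop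
  have rhs_eq : ∫⁻ x, h (x, p) = min (m1 s) (m2 t) := by
    have e2 : (fun x : E N => h (x, p))
        = fun x => {x : E N | phi N x < min (m1 s) (m2 t)}.indicator (fun _ => (1:ℝ≥0∞)) x := by
      funext x
      simp only [hhdef, Set.indicator_apply, hT1def, hT2def, Set.mem_setOf_eq, lt_min_iff]
      by_cases h1' : phi N x < m1 p.1 <;> by_cases h2' : phi N x < m2 p.2 <;>
        simp [h1', h2', s, t]
    rw [e2, lintegral_indicator hmeasI _]
    simpa using hvolI
  rw [lhs_eq, rhs_eq]
  -- the key measure inequality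
  have key1 : volume {x : E N | s < u1 x ∧ t < u2 x}
      ≤ min (volume {y : E N | s < |u1 y|}) (volume {y : E N | t < |u2 y|}) :=
    le_min (measure_mono fun x hx => lt_of_lt_of_le hx.1 (le_abs_self _))
      (measure_mono fun x hx => lt_of_lt_of_le hx.2 (le_abs_self _))
  have key2 : volume {x : E N | s < v1 x ∧ t < v2 x}
      ≤ min (volume {y : E N | s < |v1 y|}) (volume {y : E N | t < |v2 y|}) :=
    le_min (measure_mono fun x hx => lt_of_lt_of_le hx.1 (le_abs_self _))
      (measure_mono fun x hx => lt_of_lt_of_le hx.2 (le_abs_self _))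
  calc volume {x : E N | s < u1 x ∧ t < u2 x} + volume {x : E N | s < v1 x ∧ t < v2 x}
      ≤ min (volume {y : E N | s < |u1 y|}) (volume {y : E N | t < |u2 y|})
        + min (volume {y : E N | s < |v1 y|}) (volume {y : E N | t < |v2 y|}) :=
        add_le_add key1 key2
    _ ≤ min (m1 s) (m2 t) := by
        refine le_min ?_ ?_
        · exact add_le_add (min_le_left _ _) (min_le_left _ _)
        · exact add_le_add (min_le_right _ _) (min_le_right _ _)
end
end

section
/- Let (uₙ, vₙ) be a bounded sequence in H¹(ℝ³)×H¹(ℝ³) with ∫(|∇uₙ|²+|∇vₙ|²) bounded, J(uₙ,vₙ) → m < 0, and ‖uₙ‖²₂ → a, ‖vₙ‖²₂ → b. Then there exist α > 0 and yₙ ∈ ℝ³ with limsup_{n→∞} ∫_{B₂(yₙ)}(uₙ² + vₙ²) dx ≥ α > 0 (nonvanishing). -/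
open MeasureTheory Filter Set
open scoped ENNReal Topology

noncomputable section

section AuxLemmas
open Function Metric MeasureTheory Filter Set
open scoped NNReal

lemma ofReal_norm_eq_coe_nnnorm {E : Type*} [SeminormedAddGroup E] (a : E) :
    ENNReal.ofReal ‖a‖ = (‖a‖₊ : ℝ≥0∞) :=
  ENNReal.ofReal_eq_coe_nnreal _

namespace NonVanishAux

/-- 1D FTC bound for merely differentiable compactly supported functions. -/
lemma oneDim {g : ℝ → ℝ} (hg : Differentiable ℝ g) (h2g : HasCompactSupport g) (x : ℝ) :
    (‖g x‖₊ : ℝ≥0∞) ≤ ∫⁻ y in Iic x, ‖deriv g y‖₊ := by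
  by_cases hL : (∫⁻ y in Iic x, (‖deriv g y‖₊ : ℝ≥0∞)) = ⊤
  · exact hL ▸ le_top
  have hint : IntegrableOn (deriv g) (Iic x) := by
    constructor
    · exact (measurable_deriv g).aestronglyMeasurable
    · exact lt_top_iff_ne_top.2 hL
  have htend : Tendsto g atBot (𝓝 0) := by
    rw [hasCompactSupport_iff_eventuallyEq, Filter.coclosedCompact_eq_cocompact] at h2g
    exact h2g.filter_mono _root_.atBot_le_cocompact |>.tendsto
  have hftc : ∫ y in Iic x, deriv g y = g x - 0 :=
    integral_Iic_of_hasDerivAt_of_tendsto' (fun t _ => (hg t).hasDerivAt) hint htend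
  rw [sub_zero] at hftc
  calc (‖g x‖₊ : ℝ≥0∞) = ‖∫ y in Iic x, deriv g y‖₊ := by rw [hftc]
    _ ≤ ∫⁻ y in Iic x, ‖deriv g y‖₊ := enorm_integral_le_lintegral_enorm _

/-- GNS on the pi-space for differentiable compactly supported functions. -/
lemma aux_pi {u : (Fin 3 → ℝ) → ℝ} (hu : Differentiable ℝ u) (h2u : HasCompactSupport u) :
    ∫⁻ x, (‖u x‖₊ : ℝ≥0∞) ^ ((3:ℝ)/2) ≤ (∫⁻ x, ‖fderiv ℝ u x‖₊) ^ ((3:ℝ)/2) := by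
  classical
  have hp : Real.HolderConjugate (Fintype.card (Fin 3)) ((3:ℝ)/2) := by
    rw [Fintype.card_fin]
    constructor <;> norm_num
  have hmeas : Measurable fun x => (‖fderiv ℝ u x‖₊ : ℝ≥0∞) :=
    (measurable_fderiv ℝ u).nnnorm.coe_nnreal_ennreal
  calc ∫⁻ x, (‖u x‖₊ : ℝ≥0∞) ^ ((3:ℝ)/2)
      = ∫⁻ x, ((‖u x‖₊ : ℝ≥0∞) ^ (1 / ((Fintype.card (Fin 3) : ℝ) - 1))) ^ ((Fintype.card (Fin 3) : ℝ)) := by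
        congr! 2 with x
        rw [← ENNReal.rpow_mul, Fintype.card_fin]
        norm_num
    _ = ∫⁻ x, ∏ _i : Fin 3, (‖u x‖₊ : ℝ≥0∞) ^ (1 / ((Fintype.card (Fin 3) : ℝ) - 1)) := by
        congr! 2 with x
        simp_rw [Finset.prod_const, Finset.card_univ]
        rw [← ENNReal.rpow_natCast, ← ENNReal.rpow_mul]
    _ ≤ ∫⁻ x, ∏ i, (∫⁻ xᵢ, ‖fderiv ℝ u (update x i xᵢ)‖₊) ^ ((1 : ℝ) / ((Fintype.card (Fin 3) : ℝ) - 1)) := ?_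
    _ ≤ (∫⁻ x, ‖fderiv ℝ u x‖₊) ^ ((3:ℝ)/2) := lintegral_prod_lintegral_pow_le _ hp hmeas
  gcongr with x i
  · rw [Fintype.card_fin]; norm_num
  calc (‖u x‖₊ : ℝ≥0∞)
    _ ≤ ∫⁻ xᵢ in Iic (x i), ‖deriv (u ∘ update x i) xᵢ‖₊ := by
        refine le_trans (by simp) (oneDim ?_ ?_ (x i))
        · exact fun y => (hu _).comp y (hasDerivAt_update x i y).differentiableAt
        · exact h2u.comp_isClosedEmbedding (isClosedEmbedding_update x i)
    _ ≤ ∫⁻ xᵢ, (‖fderiv ℝ u (update x i xᵢ)‖₊ : ℝ≥0∞) := ?_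
  refine lintegral_mono' Measure.restrict_le_self fun y => ENNReal.coe_le_coe.2 ?_
  calc ‖deriv (u ∘ update x i) y‖₊ = ‖fderiv ℝ u (update x i y) (deriv (update x i) y)‖₊ := by
        rw [fderiv_comp_deriv _ (hu _) (hasDerivAt_update x i y).differentiableAt]
    _ ≤ ‖fderiv ℝ u (update x i y)‖₊ * ‖deriv (update x i) y‖₊ :=
        ContinuousLinearMap.le_opNNNorm ..
    _ ≤ ‖fderiv ℝ u (update x i y)‖₊ := by simp [deriv_update, Pi.nnnorm_single]

end NonVanishAux

namespace NonVanishAux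

abbrev R3' : Type := EuclideanSpace ℝ (Fin 3)

def kap : ℝ≥0 := ‖((EuclideanSpace.equiv (Fin 3) ℝ).symm : (Fin 3 → ℝ) →L[ℝ] R3')‖₊

/-- GNS on `ℝ³` (Euclidean) for differentiable compactly supported functions. -/
lemma aux_r3 {u : R3' → ℝ} (hu : Differentiable ℝ u) (h2u : HasCompactSupport u) :
    ∫⁻ x, (‖u x‖₊ : ℝ≥0∞) ^ ((3:ℝ)/2)
      ≤ (kap : ℝ≥0∞) ^ ((3:ℝ)/2) * (∫⁻ x, ‖fderiv ℝ u x‖₊) ^ ((3:ℝ)/2) := by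
  set e := EuclideanSpace.equiv (Fin 3) ℝ with he
  have hmp := EuclideanSpace.volume_preserving_symm_measurableEquiv_toLp (Fin 3)
  set v : (Fin 3 → ℝ) → ℝ := u ∘ e.symm with hv
  have hvd : Differentiable ℝ v := hu.comp e.symm.differentiable
  have h2v : HasCompactSupport v := h2u.comp_homeomorph e.symm.toHomeomorph
  have hid : ∀ x : R3', e.symm ((MeasurableEquiv.toLp 2 (Fin 3 → ℝ)).symm x) = x := fun x => rfl
  have step1 : ∫⁻ x, (‖u x‖₊ : ℝ≥0∞) ^ ((3:ℝ)/2) = ∫⁻ y, (‖v y‖₊ : ℝ≥0∞) ^ ((3:ℝ)/2) := by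
    rw [← hmp.lintegral_comp]
    · exact lintegral_congr fun x => by rw [hv]; simp [hid x]; rfl
    · exact (hvd.continuous.measurable.nnnorm.coe_nnreal_ennreal).pow_const _
  have step3 : ∫⁻ y, (‖fderiv ℝ v y‖₊ : ℝ≥0∞) ≤ (kap : ℝ≥0∞) * ∫⁻ x, ‖fderiv ℝ u x‖₊ := by
    have hfd : ∀ y, fderiv ℝ v y
        = (fderiv ℝ u (e.symm y)).comp (e.symm : (Fin 3 → ℝ) →L[ℝ] R3') := by
      intro y
      rw [hv, fderiv_comp _ (hu _) e.symm.differentiableAt, e.symm.fderiv]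
    calc ∫⁻ y, (‖fderiv ℝ v y‖₊ : ℝ≥0∞)
        ≤ ∫⁻ y, (‖fderiv ℝ u (e.symm y)‖₊ : ℝ≥0∞) * kap := by
          refine lintegral_mono fun y => ?_
          rw [hfd y, ← ENNReal.coe_mul]
          exact ENNReal.coe_le_coe.2 (ContinuousLinearMap.opNNNorm_comp_le _ _)
      _ = (∫⁻ y, (‖fderiv ℝ u (e.symm y)‖₊ : ℝ≥0∞)) * kap := by
          rw [lintegral_mul_const']
          exact ENNReal.coe_ne_top
      _ = (∫⁻ x, (‖fderiv ℝ u x‖₊ : ℝ≥0∞)) * kap := by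
          congr 1
          rw [← hmp.lintegral_comp]
          · exact lintegral_congr fun x => by rw [hid x]
          · exact ((measurable_fderiv ℝ u).comp e.symm.continuous.measurable).nnnorm.coe_nnreal_ennreal
      _ = (kap : ℝ≥0∞) * ∫⁻ x, ‖fderiv ℝ u x‖₊ := mul_comm _ _
  calc ∫⁻ x, (‖u x‖₊ : ℝ≥0∞) ^ ((3:ℝ)/2)
      = ∫⁻ y, (‖v y‖₊ : ℝ≥0∞) ^ ((3:ℝ)/2) := step1
    _ ≤ (∫⁻ y, ‖fderiv ℝ v y‖₊) ^ ((3:ℝ)/2) := aux_pi hvd h2v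
    _ ≤ ((kap : ℝ≥0∞) * ∫⁻ x, ‖fderiv ℝ u x‖₊) ^ ((3:ℝ)/2) := by
        exact ENNReal.rpow_le_rpow step3 (by norm_num)
    _ = (kap : ℝ≥0∞) ^ ((3:ℝ)/2) * (∫⁻ x, ‖fderiv ℝ u x‖₊) ^ ((3:ℝ)/2) :=
        ENNReal.mul_rpow_of_nonneg _ _ (by norm_num)

end NonVanishAux

namespace NonVanishAux

def Csix : ℝ≥0∞ := ((kap : ℝ≥0∞) ^ ((3:ℝ)/2) * (4:ℝ≥0∞) ^ ((3:ℝ)/2)) ^ (4:ℝ)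

lemma Csix_ne_top : Csix ≠ ⊤ := by
  rw [Csix]
  apply ENNReal.rpow_ne_top_of_nonneg (by norm_num)
  exact ENNReal.mul_ne_top (ENNReal.rpow_ne_top_of_nonneg (by norm_num) ENNReal.coe_ne_top)
    (ENNReal.rpow_ne_top_of_nonneg (by norm_num) (by norm_num))

lemma six_bound {g : R3' → ℝ} (hg : Differentiable ℝ g) (h2g : HasCompactSupport g) :
    ∫⁻ x, (‖g x‖₊ : ℝ≥0∞) ^ (6:ℝ)
      ≤ Csix * (∫⁻ x, (‖fderiv ℝ g x‖₊ : ℝ≥0∞) ^ (2:ℝ)) ^ (3:ℝ) := by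
  classical
  set X := ∫⁻ x, (‖g x‖₊ : ℝ≥0∞) ^ (6:ℝ) with hX
  set Y := ∫⁻ x, (‖fderiv ℝ g x‖₊ : ℝ≥0∞) ^ (2:ℝ) with hY
  rcases eq_or_ne X 0 with h0 | h0
  · rw [h0]; exact zero_le
  -- finiteness of X
  have hXt : X ≠ ⊤ := by
    obtain ⟨C, hC⟩ := (hg.continuous.norm).bounded_above_of_compact_support h2g.norm
    have hK : IsCompact (tsupport g) := h2g
    have hle : ∀ x, (‖g x‖₊ : ℝ≥0∞) ^ (6:ℝ)
        ≤ (tsupport g).indicator (fun _ => ENNReal.ofReal C ^ (6:ℝ)) x := by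
      intro x
      by_cases hx : x ∈ tsupport g
      · rw [Set.indicator_of_mem hx]
        refine ENNReal.rpow_le_rpow ?_ (by norm_num)
        rw [← ofReal_norm_eq_coe_nnnorm]
        exact ENNReal.ofReal_le_ofReal (le_trans (le_abs_self _) (hC x))
      · rw [Set.indicator_of_notMem hx, image_eq_zero_of_notMem_tsupport hx]
        simp only [nnnorm_zero, ENNReal.coe_zero]
        rw [ENNReal.zero_rpow_of_pos (by norm_num)]
    refine ne_top_of_le_ne_top ?_ (lintegral_mono hle)
    rw [lintegral_indicator (isClosed_tsupport g).measurableSet, setLIntegral_const]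
    exact ENNReal.mul_ne_top (ENNReal.rpow_ne_top_of_nonneg (by norm_num) ENNReal.ofReal_ne_top)
      hK.measure_lt_top.ne
  -- the function w = g⁴
  set w : R3' → ℝ := fun x => g x ^ 4 with hw
  have hwd : Differentiable ℝ w := hg.pow 4
  have h2w : HasCompactSupport w := h2g.comp_left (g := fun t : ℝ => t ^ 4) (by simp)
  have hwnorm : ∀ x, (‖w x‖₊ : ℝ≥0∞) ^ ((3:ℝ)/2) = (‖g x‖₊ : ℝ≥0∞) ^ (6:ℝ) := by
    intro x
    rw [hw]
    simp only [nnnorm_pow, ENNReal.coe_pow]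
    rw [← ENNReal.rpow_natCast ((‖g x‖₊ : ℝ≥0∞)) 4, ← ENNReal.rpow_mul]
    norm_num
  have hwderiv : ∀ x, fderiv ℝ w x = ((4:ℝ) * g x ^ 3) • fderiv ℝ g x := by
    intro x
    have hd := (hg x).hasFDerivAt
    have h2 := hd.mul hd
    have h4 := h2.mul h2
    have hfun : w = fun y => (g y * g y) * (g y * g y) := by
      funext y; rw [hw]; ring
    rw [hfun] at *
    rw [show (fun y => g y * g y * (g y * g y)) = g * g * (g * g) from rfl, h4.fderiv]
    simp only [Pi.mul_apply]
    module
  -- Cauchy–Schwarz bound on ∫‖Dw‖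
  have hCS : (∫⁻ x, (‖fderiv ℝ w x‖₊ : ℝ≥0∞))
      ≤ 4 * (X ^ ((1:ℝ)/2) * Y ^ ((1:ℝ)/2)) := by
    have hpt : ∀ x, (‖fderiv ℝ w x‖₊ : ℝ≥0∞)
        ≤ 4 * ((‖g x‖₊ : ℝ≥0∞) ^ (3:ℝ) * (‖fderiv ℝ g x‖₊ : ℝ≥0∞)) := by
      intro x
      rw [hwderiv x, nnnorm_smul, ENNReal.coe_mul]
      have h1 : (‖((4:ℝ) * g x ^ 3)‖₊ : ℝ≥0∞) = 4 * (‖g x‖₊ : ℝ≥0∞) ^ (3:ℝ) := by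
        rw [nnnorm_mul, nnnorm_pow, ENNReal.coe_mul, ENNReal.coe_pow,
          ← ENNReal.rpow_natCast ((‖g x‖₊ : ℝ≥0∞)) 3]
        norm_num
      rw [h1, mul_assoc]
    calc (∫⁻ x, (‖fderiv ℝ w x‖₊ : ℝ≥0∞))
        ≤ ∫⁻ x, 4 * ((‖g x‖₊ : ℝ≥0∞) ^ (3:ℝ) * (‖fderiv ℝ g x‖₊ : ℝ≥0∞)) :=
          lintegral_mono fun x => hpt x
      _ = 4 * ∫⁻ x, ((‖g x‖₊ : ℝ≥0∞) ^ (3:ℝ) * (‖fderiv ℝ g x‖₊ : ℝ≥0∞)) :=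
          lintegral_const_mul' _ _ (by norm_num)
      _ ≤ 4 * (X ^ ((1:ℝ)/2) * Y ^ ((1:ℝ)/2)) := by
          gcongr
          have hcj : Real.HolderConjugate 2 2 := by constructor <;> norm_num
          calc ∫⁻ x, ((‖g x‖₊ : ℝ≥0∞) ^ (3:ℝ) * (‖fderiv ℝ g x‖₊ : ℝ≥0∞))
              ≤ (∫⁻ x, ((‖g x‖₊ : ℝ≥0∞) ^ (3:ℝ)) ^ (2:ℝ)) ^ ((1:ℝ)/2)
                * (∫⁻ x, ((‖fderiv ℝ g x‖₊ : ℝ≥0∞)) ^ (2:ℝ)) ^ ((1:ℝ)/2) :=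
                ENNReal.lintegral_mul_le_Lp_mul_Lq _ hcj
                  ((hg.continuous.measurable.nnnorm.coe_nnreal_ennreal.pow_const _).aemeasurable)
                  ((measurable_fderiv ℝ g).nnnorm.coe_nnreal_ennreal.aemeasurable)
            _ = X ^ ((1:ℝ)/2) * Y ^ ((1:ℝ)/2) := by
                congr 1
                rw [hX]
                congr 1
                exact lintegral_congr fun x => by rw [← ENNReal.rpow_mul]; norm_num
  -- combine
  set K0 : ℝ≥0∞ := (kap : ℝ≥0∞) ^ ((3:ℝ)/2) * (4:ℝ≥0∞) ^ ((3:ℝ)/2) with hK0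
  have key : X ≤ K0 * (X ^ ((3:ℝ)/4) * Y ^ ((3:ℝ)/4)) := by
    calc X = ∫⁻ x, (‖w x‖₊ : ℝ≥0∞) ^ ((3:ℝ)/2) := by
          rw [hX]; exact (lintegral_congr fun x => (hwnorm x)).symm
      _ ≤ (kap : ℝ≥0∞) ^ ((3:ℝ)/2) * (∫⁻ x, ‖fderiv ℝ w x‖₊) ^ ((3:ℝ)/2) := aux_r3 hwd h2w
      _ ≤ (kap : ℝ≥0∞) ^ ((3:ℝ)/2) * (4 * (X ^ ((1:ℝ)/2) * Y ^ ((1:ℝ)/2))) ^ ((3:ℝ)/2) := by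
          gcongr
      _ = K0 * (X ^ ((3:ℝ)/4) * Y ^ ((3:ℝ)/4)) := by
          rw [hK0, ENNReal.mul_rpow_of_nonneg _ _ (by norm_num : (0:ℝ) ≤ 3/2),
            ENNReal.mul_rpow_of_nonneg _ _ (by norm_num : (0:ℝ) ≤ 3/2),
            ← ENNReal.rpow_mul X, ← ENNReal.rpow_mul Y]
          norm_num
          ring
  -- divide by X^(3/4)
  have hX34 : X ^ ((3:ℝ)/4) ≠ 0 := by
    simp [ENNReal.rpow_eq_zero_iff, h0, hXt]
  have hX34t : X ^ ((3:ℝ)/4) ≠ ⊤ := ENNReal.rpow_ne_top_of_nonneg (by norm_num) hXt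
  have hX1 : X ^ ((3:ℝ)/4) * X ^ ((1:ℝ)/4) = X := by
    rw [← ENNReal.rpow_add _ _ h0 hXt]
    norm_num
  have key2 : X ^ ((3:ℝ)/4) * X ^ ((1:ℝ)/4) ≤ X ^ ((3:ℝ)/4) * (K0 * Y ^ ((3:ℝ)/4)) :=
    hX1.trans_le (key.trans_eq (by ring))
  have hquarter : X ^ ((1:ℝ)/4) ≤ K0 * Y ^ ((3:ℝ)/4) :=
    (ENNReal.mul_le_mul_iff_right hX34 hX34t).1 key2
  calc X = (X ^ ((1:ℝ)/4)) ^ (4:ℝ) := by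
        rw [← ENNReal.rpow_mul]
        norm_num
    _ ≤ (K0 * Y ^ ((3:ℝ)/4)) ^ (4:ℝ) := ENNReal.rpow_le_rpow hquarter (by norm_num)
    _ = Csix * Y ^ (3:ℝ) := by
        rw [ENNReal.mul_rpow_of_nonneg _ _ (by norm_num : (0:ℝ) ≤ 4), ← ENNReal.rpow_mul Y]
        rw [Csix, hK0]
        norm_num

end NonVanishAux

namespace NonVanishAux

lemma sq_add_le (a b : ℝ≥0∞) : (a + b) ^ (2:ℝ) ≤ 4 * (a ^ (2:ℝ) + b ^ (2:ℝ)) := by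
  have h1 : a + b ≤ 2 * max a b := by
    rw [two_mul]
    exact add_le_add (le_max_left _ _) (le_max_right _ _)
  calc (a + b) ^ (2:ℝ) ≤ (2 * max a b) ^ (2:ℝ) := ENNReal.rpow_le_rpow h1 (by norm_num)
    _ = 2 ^ (2:ℝ) * (max a b) ^ (2:ℝ) := ENNReal.mul_rpow_of_nonneg _ _ (by norm_num)
    _ ≤ 4 * (a ^ (2:ℝ) + b ^ (2:ℝ)) := by
      gcongr
      · exact le_of_eq (by norm_num)
      rcases le_total a b with h | h
      · rw [max_eq_right h]
        exact le_add_self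
      · rw [max_eq_left h]
        exact le_self_add

/-- Local Sobolev-type bound: the `L⁶` mass on a unit ball is controlled by the cube of the
local `H¹` mass on the concentric radius-2 ball, uniformly in the center. -/
lemma local_six : ∃ C4 : ℝ≥0∞, C4 ≠ ⊤ ∧ ∀ (u : R3' → ℝ), Differentiable ℝ u → ∀ c : R3',
    ∫⁻ x in ball c 1, (‖u x‖₊ : ℝ≥0∞) ^ (6:ℝ)
      ≤ C4 * (∫⁻ x in ball c 2,
          ((‖u x‖₊ : ℝ≥0∞) ^ (2:ℝ) + (‖fderiv ℝ u x‖₊ : ℝ≥0∞) ^ (2:ℝ))) ^ (3:ℝ) := by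
  classical
  set χ : ContDiffBump (0 : R3') := ⟨1, 2, one_pos, one_lt_two⟩ with hχdef
  have hχd : Differentiable ℝ χ := (χ.contDiff (n := 1)).differentiable (by norm_num)
  have hχsupp : HasCompactSupport (χ : R3' → ℝ) := χ.hasCompactSupport
  obtain ⟨K0, hK0⟩ := (((χ.contDiff (n := 1)).continuous_fderiv (by norm_num)).norm).bounded_above_of_compact_support
    ((hχsupp.fderiv (𝕜 := ℝ)).norm)
  set K : ℝ≥0 := K0.toNNReal with hKdef
  have hK : ∀ y, (‖fderiv ℝ (χ : R3' → ℝ) y‖₊ : ℝ≥0∞) ≤ (K : ℝ≥0∞) := by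
    intro y
    rw [ENNReal.coe_le_coe]
    rw [← Real.toNNReal_coe (r := ‖fderiv ℝ (χ : R3' → ℝ) y‖₊)]
    apply Real.toNNReal_le_toNNReal
    simpa using le_trans (le_abs_self _) (hK0 y)
  set M : ℝ≥0∞ := 4 * (1 + (K : ℝ≥0∞) ^ (2:ℝ)) with hMdef
  have hMt : M ≠ ⊤ := by
    rw [hMdef]
    refine ENNReal.mul_ne_top (by norm_num) (ENNReal.add_ne_top.2 ⟨by norm_num, ?_⟩)
    exact ENNReal.rpow_ne_top_of_nonneg (by norm_num) ENNReal.coe_ne_top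
  refine ⟨Csix * M ^ (3:ℝ), ENNReal.mul_ne_top Csix_ne_top
    (ENNReal.rpow_ne_top_of_nonneg (by norm_num) hMt), fun u hu c => ?_⟩
  set g : R3' → ℝ := fun x => χ (x - c) * u x with hg
  have hχcd : Differentiable ℝ fun x : R3' => χ (x - c) :=
    hχd.comp (differentiable_id.sub_const c)
  have hgd : Differentiable ℝ g := hχcd.mul hu
  have hgsupp : support g ⊆ ball c 2 := by
    intro x hx
    have hx1 : χ (x - c) ≠ 0 := fun h => hx (by rw [hg]; simp [h])
    have := χ.support_eq ▸ (mem_support.2 hx1 : x - c ∈ support χ)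
    simpa [mem_ball, dist_eq_norm] using this
  have h2g : HasCompactSupport g :=
    HasCompactSupport.intro (isCompact_closedBall c 2)
      (fun x hx => by
        by_contra h
        exact hx (ball_subset_closedBall (hgsupp (mem_support.2 h))))
  -- derivative bound
  have hχc_deriv : ∀ x, fderiv ℝ (fun y : R3' => χ (y - c)) x = fderiv ℝ (χ : R3' → ℝ) (x - c) := by
    intro x
    have h1 : HasFDerivAt (fun y : R3' => y - c) (ContinuousLinearMap.id ℝ R3') x :=
      (hasFDerivAt_id x).sub_const c
    have h2 : HasFDerivAt (χ : R3' → ℝ) (fderiv ℝ (χ : R3' → ℝ) (x - c)) (x - c) :=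
      (hχd (x - c)).hasFDerivAt
    have := (h2.comp x h1).fderiv
    rwa [ContinuousLinearMap.comp_id] at this
  have hDg : ∀ x, (‖fderiv ℝ g x‖₊ : ℝ≥0∞) ^ (2:ℝ)
      ≤ M * ((‖u x‖₊ : ℝ≥0∞) ^ (2:ℝ) + (‖fderiv ℝ u x‖₊ : ℝ≥0∞) ^ (2:ℝ)) := by
    intro x
    have hfd : fderiv ℝ g x
        = χ (x - c) • fderiv ℝ u x + u x • fderiv ℝ (fun y : R3' => χ (y - c)) x := by
      rw [hg]
      exact (((hχcd x).hasFDerivAt).mul ((hu x).hasFDerivAt)).fderiv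
    have hbound : (‖fderiv ℝ g x‖₊ : ℝ≥0∞)
        ≤ (‖fderiv ℝ u x‖₊ : ℝ≥0∞) + (K : ℝ≥0∞) * ‖u x‖₊ := by
      rw [hfd]
      have h3 : (‖χ (x - c) • fderiv ℝ u x + u x • fderiv ℝ (fun y : R3' => χ (y - c)) x‖₊ : ℝ≥0∞)
          ≤ (‖χ (x - c) • fderiv ℝ u x‖₊ : ℝ≥0∞)
            + (‖u x • fderiv ℝ (fun y : R3' => χ (y - c)) x‖₊ : ℝ≥0∞) := by
        exact_mod_cast nnnorm_add_le _ _
      refine h3.trans (add_le_add ?_ ?_)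
      · rw [nnnorm_smul, ENNReal.coe_mul]
        have hχ1 : (‖χ (x - c)‖₊ : ℝ≥0∞) ≤ 1 := by
          rw [← ENNReal.coe_one, ENNReal.coe_le_coe, ← NNReal.coe_le_coe]
          simp only [coe_nnnorm, Real.norm_eq_abs, NNReal.coe_one]
          rw [abs_of_nonneg χ.nonneg]
          exact χ.le_one
        calc (‖χ (x - c)‖₊ : ℝ≥0∞) * ‖fderiv ℝ u x‖₊ ≤ 1 * ‖fderiv ℝ u x‖₊ := by gcongr
          _ = _ := one_mul _
      · rw [nnnorm_smul, ENNReal.coe_mul, hχc_deriv x, mul_comm]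
        exact mul_le_mul_left (hK _) _
    calc (‖fderiv ℝ g x‖₊ : ℝ≥0∞) ^ (2:ℝ)
        ≤ ((‖fderiv ℝ u x‖₊ : ℝ≥0∞) + (K : ℝ≥0∞) * ‖u x‖₊) ^ (2:ℝ) :=
          ENNReal.rpow_le_rpow hbound (by norm_num)
      _ ≤ 4 * ((‖fderiv ℝ u x‖₊ : ℝ≥0∞) ^ (2:ℝ) + ((K : ℝ≥0∞) * ‖u x‖₊) ^ (2:ℝ)) :=
          sq_add_le _ _
      _ = 4 * (‖fderiv ℝ u x‖₊ : ℝ≥0∞) ^ (2:ℝ)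
          + 4 * ((K : ℝ≥0∞) ^ (2:ℝ) * (‖u x‖₊ : ℝ≥0∞) ^ (2:ℝ)) := by
          rw [ENNReal.mul_rpow_of_nonneg _ _ (by norm_num : (0:ℝ) ≤ 2), mul_add]
      _ ≤ M * ((‖u x‖₊ : ℝ≥0∞) ^ (2:ℝ) + (‖fderiv ℝ u x‖₊ : ℝ≥0∞) ^ (2:ℝ)) := by
          have e : M * ((‖u x‖₊ : ℝ≥0∞) ^ (2:ℝ) + (‖fderiv ℝ u x‖₊ : ℝ≥0∞) ^ (2:ℝ))
              = (4 * (‖fderiv ℝ u x‖₊ : ℝ≥0∞) ^ (2:ℝ)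
                  + 4 * ((K : ℝ≥0∞) ^ (2:ℝ) * (‖fderiv ℝ u x‖₊ : ℝ≥0∞) ^ (2:ℝ)))
                + (4 * ((‖u x‖₊ : ℝ≥0∞) ^ (2:ℝ))
                  + 4 * ((K : ℝ≥0∞) ^ (2:ℝ) * (‖u x‖₊ : ℝ≥0∞) ^ (2:ℝ))) := by
            rw [hMdef]; ring
          rw [e]
          exact add_le_add le_self_add le_add_self
  -- put everything together
  set A := ∫⁻ x in ball c 2,
      ((‖u x‖₊ : ℝ≥0∞) ^ (2:ℝ) + (‖fderiv ℝ u x‖₊ : ℝ≥0∞) ^ (2:ℝ)) with hA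
  have hball1 : ∀ᵐ x ∂volume, x ∈ ball c 1 →
      (‖u x‖₊ : ℝ≥0∞) ^ (6:ℝ) = (‖g x‖₊ : ℝ≥0∞) ^ (6:ℝ) := by
    refine ae_of_all _ fun x hx => ?_
    have h1 : χ (x - c) = 1 := by
      apply χ.one_of_mem_closedBall
      have := mem_ball_iff_norm.1 hx
      simp only [mem_closedBall, dist_eq_norm, sub_zero]
      exact le_of_lt (lt_of_lt_of_le this (by norm_num))
    rw [hg]
    simp [h1]
  have hDg_supp : ∀ x ∉ closedBall c 2, (‖fderiv ℝ g x‖₊ : ℝ≥0∞) ^ (2:ℝ) = 0 := by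
    intro x hx
    have hz : fderiv ℝ g x = 0 := by
      by_contra h
      exact hx (closure_ball_subset_closedBall
        ((closure_mono hgsupp) (support_fderiv_subset ℝ (mem_support.2 h))))
    rw [hz]
    simp only [nnnorm_zero, ENNReal.coe_zero]
    exact ENNReal.zero_rpow_of_pos (by norm_num)
  have hsplit : (∫⁻ x, (‖fderiv ℝ g x‖₊ : ℝ≥0∞) ^ (2:ℝ))
      = ∫⁻ x in closedBall c 2, (‖fderiv ℝ g x‖₊ : ℝ≥0∞) ^ (2:ℝ) := by
    rw [← lintegral_indicator measurableSet_closedBall]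
    refine lintegral_congr fun x => ?_
    by_cases hx : x ∈ closedBall c 2
    · rw [Set.indicator_of_mem hx]
    · rw [Set.indicator_of_notMem hx, hDg_supp x hx]
  have hcb : (∫⁻ x in closedBall c 2, (‖fderiv ℝ g x‖₊ : ℝ≥0∞) ^ (2:ℝ))
      ≤ ∫⁻ x in ball c 2, (‖fderiv ℝ g x‖₊ : ℝ≥0∞) ^ (2:ℝ) := by
    rw [← ball_union_sphere]
    refine le_trans (lintegral_union_le _ _ _) ?_
    rw [setLIntegral_measure_zero _ _ (Measure.addHaar_sphere volume c 2), add_zero]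
  have hDgint : (∫⁻ x, (‖fderiv ℝ g x‖₊ : ℝ≥0∞) ^ (2:ℝ)) ≤ M * A := by
    rw [hsplit]
    refine hcb.trans ?_
    calc (∫⁻ x in ball c 2, (‖fderiv ℝ g x‖₊ : ℝ≥0∞) ^ (2:ℝ))
        ≤ ∫⁻ x in ball c 2,
            M * ((‖u x‖₊ : ℝ≥0∞) ^ (2:ℝ) + (‖fderiv ℝ u x‖₊ : ℝ≥0∞) ^ (2:ℝ)) :=
          lintegral_mono fun x => hDg x
      _ = M * A := lintegral_const_mul' _ _ hMt
  calc ∫⁻ x in ball c 1, (‖u x‖₊ : ℝ≥0∞) ^ (6:ℝ)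
      = ∫⁻ x in ball c 1, (‖g x‖₊ : ℝ≥0∞) ^ (6:ℝ) :=
        setLIntegral_congr_fun_ae measurableSet_ball hball1
    _ ≤ ∫⁻ x, (‖g x‖₊ : ℝ≥0∞) ^ (6:ℝ) := lintegral_mono' Measure.restrict_le_self le_rfl
    _ ≤ Csix * (∫⁻ x, (‖fderiv ℝ g x‖₊ : ℝ≥0∞) ^ (2:ℝ)) ^ (3:ℝ) := six_bound hgd h2g
    _ ≤ Csix * (M * A) ^ (3:ℝ) := by gcongr
    _ = Csix * M ^ (3:ℝ) * A ^ (3:ℝ) := by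
        rw [ENNReal.mul_rpow_of_nonneg _ _ (by norm_num : (0:ℝ) ≤ 3), mul_assoc]


end NonVanishAux

namespace NonVanishAux

def pt (z : Fin 3 → ℤ) : R3' := WithLp.toLp 2 (fun i => (z i : ℝ))

lemma coord_le (x y : R3') (i : Fin 3) : dist (x i) (y i) ≤ dist x y := by
  rw [EuclideanSpace.dist_eq]
  have h1 : dist (x i) (y i) = Real.sqrt (dist (x i) (y i) ^ 2) :=
    (Real.sqrt_sq dist_nonneg).symm
  rw [h1]
  apply Real.sqrt_le_sqrt
  exact Finset.single_le_sum (f := fun j => dist (x j) (y j) ^ 2) (fun j _ => sq_nonneg _) (Finset.mem_univ i)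

lemma covering : (⋃ z : Fin 3 → ℤ, ball (pt z) 1) = univ := by
  refine eq_univ_of_forall fun x => mem_iUnion.2 ⟨fun i => round (x i), ?_⟩
  rw [mem_ball, EuclideanSpace.dist_eq]
  have hb : ∀ i : Fin 3, dist (x i) (pt (fun i => round (x i)) i) ^ 2 ≤ (1/2 : ℝ) ^ 2 := by
    intro i
    have : dist (x i) ((round (x i) : ℝ)) ≤ 1/2 := by
      rw [Real.dist_eq]
      exact abs_sub_round _
    exact pow_le_pow_left₀ dist_nonneg this 2
  have hsum : (∑ i : Fin 3, dist (x i) (pt (fun i => round (x i)) i) ^ 2) ≤ 3/4 := by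
    calc (∑ i : Fin 3, dist (x i) (pt (fun i => round (x i)) i) ^ 2)
        ≤ ∑ _i : Fin 3, (1/2:ℝ)^2 := Finset.sum_le_sum fun i _ => hb i
      _ = 3/4 := by norm_num
  calc Real.sqrt (∑ i : Fin 3, dist (x i) (pt (fun i => round (x i)) i) ^ 2)
      ≤ Real.sqrt (3/4) := Real.sqrt_le_sqrt hsum
    _ < 1 := by
        rw [show (1:ℝ) = Real.sqrt 1 by simp]
        exact Real.sqrt_lt_sqrt (by norm_num) (by norm_num)

lemma overlap (h : R3' → ℝ≥0∞) (hmeas : Measurable h) :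
    (∑' z : Fin 3 → ℤ, ∫⁻ x in ball (pt z) 2, h x) ≤ 125 * ∫⁻ x, h x := by
  classical
  have h1 : ∀ z : Fin 3 → ℤ, (∫⁻ x in ball (pt z) 2, h x)
      = ∫⁻ x, (ball (pt z) 2).indicator h x :=
    fun z => (lintegral_indicator measurableSet_ball h).symm
  simp_rw [h1]
  rw [← lintegral_tsum (fun z => (hmeas.indicator measurableSet_ball).aemeasurable)]
  have hpt : ∀ x, (∑' z : Fin 3 → ℤ, (ball (pt z) 2).indicator h x) ≤ 125 * h x := by
    intro x
    set S : Finset (Fin 3 → ℤ) :=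
      Fintype.piFinset (fun i => Finset.Icc (⌊x i⌋ - 2) (⌊x i⌋ + 2)) with hS
    have hvanish : ∀ z ∉ S, (ball (pt z) 2).indicator h x = 0 := by
      intro z hz
      rw [Set.indicator_of_notMem]
      intro hmem
      apply hz
      rw [hS, Fintype.mem_piFinset]
      intro i
      have hcd : dist (x i) ((z i : ℝ)) < 2 := lt_of_le_of_lt (coord_le x (pt z) i) hmem
      rw [Real.dist_eq, abs_lt] at hcd
      have hfl : (⌊x i⌋ : ℝ) ≤ x i := Int.floor_le _
      have hfu : x i < (⌊x i⌋ : ℝ) + 1 := Int.lt_floor_add_one _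
      rw [Finset.mem_Icc]
      constructor
      · have : ((⌊x i⌋ - 2 : ℤ) : ℝ) ≤ (z i : ℝ) := by push_cast; linarith
        exact_mod_cast this
      · have h5 : ((z i : ℤ) : ℝ) < ((⌊x i⌋ + 3 : ℤ) : ℝ) := by push_cast; linarith
        have h6 : z i < ⌊x i⌋ + 3 := by exact_mod_cast h5
        omega
    have hsum := tsum_eq_sum (L := SummationFilter.unconditional _) hvanish
    rw [hsum]
    have hcard : S.card = 125 := by
      rw [hS, Fintype.card_piFinset]
      have hic : ∀ i : Fin 3, (Finset.Icc (⌊x i⌋ - 2) (⌊x i⌋ + 2)).card = 5 := by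
        intro i; rw [Int.card_Icc]; omega
      simp only [hic, Finset.prod_const, Finset.card_univ, Fintype.card_fin]
      norm_num
    calc ∑ z ∈ S, (ball (pt z) 2).indicator h x
        ≤ ∑ _z ∈ S, h x := Finset.sum_le_sum fun z _ => Set.indicator_le_self' (fun _ _ => zero_le) x
      _ = S.card * h x := by rw [Finset.sum_const, nsmul_eq_mul]
      _ = 125 * h x := by rw [hcard]; norm_num
  calc ∫⁻ x, (∑' z : Fin 3 → ℤ, (ball (pt z) 2).indicator h x)
      ≤ ∫⁻ x, 125 * h x := lintegral_mono hpt
    _ = 125 * ∫⁻ x, h x := lintegral_const_mul' _ _ (by norm_num)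

end NonVanishAux

namespace NonVanishAux

lemma global_four : ∃ C5 : ℝ≥0∞, C5 ≠ ⊤ ∧ ∀ (u : R3' → ℝ), Differentiable ℝ u →
    ∀ T : ℝ≥0∞, (∀ c : R3', (∫⁻ x in ball c 2, (‖u x‖₊ : ℝ≥0∞) ^ (2:ℝ)) ≤ T) →
    ∫⁻ x, (‖u x‖₊ : ℝ≥0∞) ^ (4:ℝ)
      ≤ C5 * T ^ ((1:ℝ)/2)
        * (∫⁻ x, ((‖u x‖₊ : ℝ≥0∞) ^ (2:ℝ) + (‖fderiv ℝ u x‖₊ : ℝ≥0∞) ^ (2:ℝ))) ^ ((3:ℝ)/2) := by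
  classical
  obtain ⟨C4, hC4t, hC4⟩ := local_six
  refine ⟨C4 ^ ((1:ℝ)/2) * 125 ^ ((3:ℝ)/2),
    ENNReal.mul_ne_top (ENNReal.rpow_ne_top_of_nonneg (by norm_num) hC4t)
      (ENNReal.rpow_ne_top_of_nonneg (by norm_num) (by norm_num)), fun u hu T hT => ?_⟩
  set h : R3' → ℝ≥0∞ :=
    fun x => (‖u x‖₊ : ℝ≥0∞) ^ (2:ℝ) + (‖fderiv ℝ u x‖₊ : ℝ≥0∞) ^ (2:ℝ) with hh
  have hmeas_u : Measurable fun x => (‖u x‖₊ : ℝ≥0∞) :=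
    hu.continuous.measurable.nnnorm.coe_nnreal_ennreal
  have hmeas_h : Measurable h := by
    rw [hh]
    exact (hmeas_u.pow_const _).add
      (((measurable_fderiv ℝ u).nnnorm.coe_nnreal_ennreal).pow_const _)
  set a : (Fin 3 → ℤ) → ℝ≥0∞ := fun z => ∫⁻ x in ball (pt z) 2, h x with ha
  set S : ℝ≥0∞ := ∑' z : Fin 3 → ℤ, a z with hSdef
  set A : ℝ≥0∞ := ∫⁻ x, h x with hA
  have hover : S ≤ 125 * A := overlap h hmeas_h
  have hperball : ∀ z : Fin 3 → ℤ, (∫⁻ x in ball (pt z) 1, (‖u x‖₊ : ℝ≥0∞) ^ (4:ℝ))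
      ≤ T ^ ((1:ℝ)/2) * (C4 ^ ((1:ℝ)/2) * a z ^ ((3:ℝ)/2)) := by
    intro z
    have hcj : Real.HolderConjugate 2 2 := by constructor <;> norm_num
    have hCS : (∫⁻ x in ball (pt z) 1, (‖u x‖₊ : ℝ≥0∞) ^ (4:ℝ))
        ≤ (∫⁻ x in ball (pt z) 1, (‖u x‖₊ : ℝ≥0∞) ^ (2:ℝ)) ^ ((1:ℝ)/2)
          * (∫⁻ x in ball (pt z) 1, (‖u x‖₊ : ℝ≥0∞) ^ (6:ℝ)) ^ ((1:ℝ)/2) := by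
      have heq : (∫⁻ x in ball (pt z) 1, (‖u x‖₊ : ℝ≥0∞) ^ (4:ℝ))
          = ∫⁻ x in ball (pt z) 1,
              ((fun x => (‖u x‖₊ : ℝ≥0∞)) * fun x => (‖u x‖₊ : ℝ≥0∞) ^ (3:ℝ)) x := by
        refine lintegral_congr fun x => ?_
        simp only [Pi.mul_apply]
        rw [show (4:ℝ) = 1 + 3 by norm_num,
          ENNReal.rpow_add_of_nonneg _ _ (by norm_num) (by norm_num), ENNReal.rpow_one]
      rw [heq]
      refine le_trans (ENNReal.lintegral_mul_le_Lp_mul_Lq _ hcj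
        hmeas_u.aemeasurable ((hmeas_u.pow_const _).aemeasurable)) (le_of_eq ?_)
      congr 1
      congr 1
      exact lintegral_congr fun x => by
        rw [← ENNReal.rpow_mul]
        norm_num
    refine hCS.trans ?_
    have h1 : (∫⁻ x in ball (pt z) 1, (‖u x‖₊ : ℝ≥0∞) ^ (2:ℝ)) ^ ((1:ℝ)/2)
        ≤ T ^ ((1:ℝ)/2) := by
      refine ENNReal.rpow_le_rpow ?_ (by norm_num)
      refine le_trans (lintegral_mono_set (ball_subset_ball (by norm_num))) (hT (pt z))
    have h2 : (∫⁻ x in ball (pt z) 1, (‖u x‖₊ : ℝ≥0∞) ^ (6:ℝ)) ^ ((1:ℝ)/2)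
        ≤ C4 ^ ((1:ℝ)/2) * a z ^ ((3:ℝ)/2) := by
      have := hC4 u hu (pt z)
      calc (∫⁻ x in ball (pt z) 1, (‖u x‖₊ : ℝ≥0∞) ^ (6:ℝ)) ^ ((1:ℝ)/2)
          ≤ (C4 * a z ^ (3:ℝ)) ^ ((1:ℝ)/2) := ENNReal.rpow_le_rpow this (by norm_num)
        _ = C4 ^ ((1:ℝ)/2) * a z ^ ((3:ℝ)/2) := by
            rw [ENNReal.mul_rpow_of_nonneg _ _ (by norm_num : (0:ℝ) ≤ 1/2),
              ← ENNReal.rpow_mul]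
            norm_num
    exact mul_le_mul' h1 h2
  have htsum32 : (∑' z : Fin 3 → ℤ, a z ^ ((3:ℝ)/2)) ≤ S ^ ((3:ℝ)/2) := by
    have hz : ∀ z : Fin 3 → ℤ, a z ^ ((3:ℝ)/2) ≤ a z * S ^ ((1:ℝ)/2) := by
      intro z
      have e : a z ^ ((3:ℝ)/2) = a z * a z ^ ((1:ℝ)/2) := by
        rw [show (3:ℝ)/2 = 1 + 1/2 by norm_num,
          ENNReal.rpow_add_of_nonneg _ _ (by norm_num) (by norm_num), ENNReal.rpow_one]
      rw [e]
      exact mul_le_mul' le_rfl (ENNReal.rpow_le_rpow (ENNReal.le_tsum z) (by norm_num))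
    calc (∑' z : Fin 3 → ℤ, a z ^ ((3:ℝ)/2)) ≤ ∑' z : Fin 3 → ℤ, a z * S ^ ((1:ℝ)/2) :=
          ENNReal.tsum_le_tsum hz
      _ = S * S ^ ((1:ℝ)/2) := ENNReal.tsum_mul_right
      _ = S ^ ((3:ℝ)/2) := by
          rw [show (3:ℝ)/2 = 1 + 1/2 by norm_num,
            ENNReal.rpow_add_of_nonneg _ _ (by norm_num) (by norm_num), ENNReal.rpow_one]
  calc ∫⁻ x, (‖u x‖₊ : ℝ≥0∞) ^ (4:ℝ)
      = ∫⁻ x in ⋃ z : Fin 3 → ℤ, ball (pt z) 1, (‖u x‖₊ : ℝ≥0∞) ^ (4:ℝ) := by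
        rw [covering, Measure.restrict_univ]
    _ ≤ ∑' z : Fin 3 → ℤ, ∫⁻ x in ball (pt z) 1, (‖u x‖₊ : ℝ≥0∞) ^ (4:ℝ) :=
        lintegral_iUnion_le _ _
    _ ≤ ∑' z : Fin 3 → ℤ, T ^ ((1:ℝ)/2) * (C4 ^ ((1:ℝ)/2) * a z ^ ((3:ℝ)/2)) :=
        ENNReal.tsum_le_tsum hperball
    _ = T ^ ((1:ℝ)/2) * (C4 ^ ((1:ℝ)/2) * ∑' z : Fin 3 → ℤ, a z ^ ((3:ℝ)/2)) := by
        rw [ENNReal.tsum_mul_left, ENNReal.tsum_mul_left]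
    _ ≤ T ^ ((1:ℝ)/2) * (C4 ^ ((1:ℝ)/2) * S ^ ((3:ℝ)/2)) := by gcongr
    _ ≤ T ^ ((1:ℝ)/2) * (C4 ^ ((1:ℝ)/2) * (125 * A) ^ ((3:ℝ)/2)) := by
        gcongr
    _ = C4 ^ ((1:ℝ)/2) * 125 ^ ((3:ℝ)/2) * T ^ ((1:ℝ)/2) * A ^ ((3:ℝ)/2) := by
        rw [ENNReal.mul_rpow_of_nonneg _ _ (by norm_num : (0:ℝ) ≤ 3/2)]
        ring

end NonVanishAux

namespace NonVanishAux

lemma enn_abs_pow (a : ℝ) (k : ℕ) : ENNReal.ofReal |a ^ k| = (‖a‖₊ : ℝ≥0∞) ^ (k:ℝ) := by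
  rw [abs_pow, ENNReal.ofReal_pow (abs_nonneg a), ENNReal.rpow_natCast]
  congr 1
  rw [← ofReal_norm_eq_coe_nnnorm, Real.norm_eq_abs]

lemma enn_sq_norm {F : Type*} [NormedAddCommGroup F] (v : F) :
    (‖v‖₊ : ℝ≥0∞) ^ (2:ℝ) = ENNReal.ofReal (‖v‖ ^ 2) := by
  rw [ENNReal.ofReal_pow (norm_nonneg v), ofReal_norm_eq_coe_nnnorm,
    ← ENNReal.rpow_natCast (‖v‖₊ : ℝ≥0∞) 2]
  norm_num

lemma enn_mixed (a b : ℝ) :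
    ENNReal.ofReal |a ^ 2 * b| = (‖a‖₊ : ℝ≥0∞) ^ (2:ℝ) * (‖b‖₊ : ℝ≥0∞) := by
  rw [abs_mul, ENNReal.ofReal_mul (abs_nonneg _), enn_abs_pow]
  congr 1
  rw [← ofReal_norm_eq_coe_nnnorm, Real.norm_eq_abs]

lemma enn_two (a : ℝ) : (‖a‖₊ : ℝ≥0∞) ^ (2:ℝ) = ENNReal.ofReal (a ^ 2) := by
  rw [show (2:ℝ) = ((2:ℕ):ℝ) by norm_num, ← enn_abs_pow, abs_of_nonneg (by positivity)]

lemma enn_three (a : ℝ) : (‖a‖₊ : ℝ≥0∞) ^ (3:ℝ) = ENNReal.ofReal |a ^ 3| := by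
  rw [show (3:ℝ) = ((3:ℕ):ℝ) by norm_num, ← enn_abs_pow]

lemma enn_four (a : ℝ) : (‖a‖₊ : ℝ≥0∞) ^ (4:ℝ) = ENNReal.ofReal |a ^ 4| := by
  rw [show (4:ℝ) = ((4:ℕ):ℝ) by norm_num, ← enn_abs_pow]

lemma young3 (x y : ℝ≥0∞) : x ^ (2:ℝ) * y ≤ x ^ (3:ℝ) + y ^ (3:ℝ) := by
  rcases le_total x y with h | h
  · calc x ^ (2:ℝ) * y ≤ y ^ (2:ℝ) * y := by gcongr
      _ = y ^ (3:ℝ) := by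
          nth_rewrite 2 [← ENNReal.rpow_one y]
          rw [← ENNReal.rpow_add_of_nonneg _ _ (by norm_num) (by norm_num)]
          norm_num
      _ ≤ x ^ (3:ℝ) + y ^ (3:ℝ) := le_add_self
  · calc x ^ (2:ℝ) * y ≤ x ^ (2:ℝ) * x := by gcongr
      _ = x ^ (3:ℝ) := by
          nth_rewrite 2 [← ENNReal.rpow_one x]
          rw [← ENNReal.rpow_add_of_nonneg _ _ (by norm_num) (by norm_num)]
          norm_num
      _ ≤ x ^ (3:ℝ) + y ^ (3:ℝ) := le_self_add

lemma sqrt_tendsto {f : ℕ → ℝ≥0∞} (hf : Tendsto f atTop (𝓝 0)) :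
    Tendsto (fun n => f n ^ ((1:ℝ)/2)) atTop (𝓝 0) := by
  rw [ENNReal.tendsto_atTop_zero] at hf ⊢
  intro ε hε
  rcases eq_or_ne ε ⊤ with rfl | hεt
  · exact ⟨0, fun n _ => le_top⟩
  obtain ⟨N, hN⟩ := hf (ε ^ (2:ℝ)) (ENNReal.rpow_pos hε hεt)
  refine ⟨N, fun n hn => ?_⟩
  calc f n ^ ((1:ℝ)/2) ≤ (ε ^ (2:ℝ)) ^ ((1:ℝ)/2) :=
        ENNReal.rpow_le_rpow (hN n hn) (by norm_num)
    _ = ε := by rw [← ENNReal.rpow_mul]; norm_num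

lemma three_bound {w : R3' → ℝ} (hw : Measurable fun x => (‖w x‖₊ : ℝ≥0∞)) :
    ∫⁻ x, (‖w x‖₊ : ℝ≥0∞) ^ (3:ℝ)
      ≤ (∫⁻ x, (‖w x‖₊ : ℝ≥0∞) ^ (2:ℝ)) ^ ((1:ℝ)/2)
        * (∫⁻ x, (‖w x‖₊ : ℝ≥0∞) ^ (4:ℝ)) ^ ((1:ℝ)/2) := by
  have hcj : Real.HolderConjugate 2 2 := by constructor <;> norm_num
  have heq : (∫⁻ x, (‖w x‖₊ : ℝ≥0∞) ^ (3:ℝ))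
      = ∫⁻ x, ((fun x => (‖w x‖₊ : ℝ≥0∞)) * fun x => (‖w x‖₊ : ℝ≥0∞) ^ (2:ℝ)) x := by
    refine lintegral_congr fun x => ?_
    simp only [Pi.mul_apply]
    rw [show (3:ℝ) = 1 + 2 by norm_num,
      ENNReal.rpow_add_of_nonneg _ _ (by norm_num) (by norm_num), ENNReal.rpow_one]
  rw [heq]
  refine le_trans (ENNReal.lintegral_mul_le_Lp_mul_Lq _ hcj hw.aemeasurable
    ((hw.pow_const _).aemeasurable)) (le_of_eq ?_)
  congr 1
  congr 1
  exact lintegral_congr fun x => by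
    rw [← ENNReal.rpow_mul]
    norm_num

lemma grad_norm_eq {u : R3' → ℝ} (x : R3') : ‖gradient u x‖ = ‖fderiv ℝ u x‖ := by
  rw [gradient]
  exact LinearIsometryEquiv.norm_map _ _

end NonVanishAux

end AuxLemmas

open NonVanishAux in
/-- **Nonvanishing of minimizing sequences.** If `(uₙ,vₙ)` is bounded in `H¹(ℝ³)²`,
`J(uₙ,vₙ) → m < 0`, `‖uₙ‖₂² → a` and `‖vₙ‖₂² → b`, then there are `α > 0` and points
`yₙ ∈ ℝ³` with `limsup ∫_{B₂(yₙ)} (uₙ² + vₙ²) ≥ α`. -/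
theorem nonvanishing (β a b m : ℝ) (hβ : 0 < β) (hm : m < 0)
    (un vn : ℕ → R3 → ℝ) (hun : ∀ n, H1 (un n)) (hvn : ∀ n, H1 (vn n))
    (hbdd : ∃ C : ℝ, ∀ n,
      (∫ x, ((un n x)^2 + (vn n x)^2)) +
        (∫ x, (‖gradient (un n) x‖^2 + ‖gradient (vn n) x‖^2)) ≤ C)
    (hJ : Filter.Tendsto (fun n => J β (un n) (vn n)) Filter.atTop (𝓝 m))
    (hma : Filter.Tendsto (fun n => ∫ x, (un n x)^2) Filter.atTop (𝓝 a))
    (hmb : Filter.Tendsto (fun n => ∫ x, (vn n x)^2) Filter.atTop (𝓝 b)) :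
    ∃ α > 0, ∃ y : ℕ → R3,
      α ≤ Filter.atTop.limsup
        (fun n => ∫ x in Metric.ball (y n) 2, ((un n x)^2 + (vn n x)^2)) := by
  classical
  by_contra hcon
  push_neg at hcon
  obtain ⟨C, hC⟩ := hbdd
  -- integrability facts
  have hIntu : ∀ n, Integrable (fun x => (un n x)^2) := fun n => (hun n).2.1.integrable_sq
  have hIntv : ∀ n, Integrable (fun x => (vn n x)^2) := fun n => (hvn n).2.1.integrable_sq
  have hInt : ∀ n, Integrable (fun x => (un n x)^2 + (vn n x)^2) :=
    fun n => (hIntu n).add (hIntv n)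
  have hIntgu : ∀ n, Integrable (fun x => ‖gradient (un n) x‖^2) :=
    fun n => (hun n).2.2.integrable_sq
  have hIntgv : ∀ n, Integrable (fun x => ‖gradient (vn n) x‖^2) :=
    fun n => (hvn n).2.2.integrable_sq
  have hIntg : ∀ n, Integrable (fun x => ‖gradient (un n) x‖^2 + ‖gradient (vn n) x‖^2) :=
    fun n => (hIntgu n).add (hIntgv n)
  have hCnn : 0 ≤ C := by
    have h1 : (0:ℝ) ≤ ∫ x, ((un 0 x)^2 + (vn 0 x)^2) := integral_nonneg fun x => by positivity
    have h2 : (0:ℝ) ≤ ∫ x, (‖gradient (un 0) x‖^2 + ‖gradient (vn 0) x‖^2) :=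
      integral_nonneg fun x => by positivity
    linarith [hC 0]
  -- mass bound
  have hmass : ∀ n, (∫ x, ((un n x)^2 + (vn n x)^2)) ≤ C := by
    intro n
    have h2 : (0:ℝ) ≤ ∫ x, (‖gradient (un n) x‖^2 + ‖gradient (vn n) x‖^2) :=
      integral_nonneg fun x => by positivity
    linarith [hC n]
  have hgradmass : ∀ n, (∫ x, (‖gradient (un n) x‖^2 + ‖gradient (vn n) x‖^2)) ≤ C := by
    intro n
    have h2 : (0:ℝ) ≤ ∫ x, ((un n x)^2 + (vn n x)^2) :=
      integral_nonneg fun x => by positivity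
    linarith [hC n]
  -- ℝ≥0∞-valued local masses
  set Lm : ℕ → R3 → ℝ≥0∞ :=
    fun n c => ∫⁻ x in Metric.ball c 2, ENNReal.ofReal ((un n x)^2 + (vn n x)^2) with hLm
  have hLm_le : ∀ n c, Lm n c ≤ ENNReal.ofReal C := by
    intro n c
    calc Lm n c ≤ ∫⁻ x, ENNReal.ofReal ((un n x)^2 + (vn n x)^2) :=
          lintegral_mono' Measure.restrict_le_self le_rfl
      _ = ENNReal.ofReal (∫ x, ((un n x)^2 + (vn n x)^2)) :=
          (ofReal_integral_eq_lintegral_ofReal (hInt n) (ae_of_all _ fun x => by positivity)).symm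
      _ ≤ ENNReal.ofReal C := ENNReal.ofReal_le_ofReal (hmass n)
  have hLm_ne_top : ∀ n c, Lm n c ≠ ⊤ :=
    fun n c => ne_top_of_le_ne_top ENNReal.ofReal_ne_top (hLm_le n c)
  -- real local masses
  have hrm : ∀ n y, (∫ x in Metric.ball y 2, ((un n x)^2 + (vn n x)^2)) = (Lm n y).toReal := by
    intro n y
    rw [hLm]
    exact integral_eq_lintegral_of_nonneg_ae (ae_of_all _ fun x => by positivity)
      ((hInt n).aestronglyMeasurable.restrict)
  have hrm_le : ∀ n y, (∫ x in Metric.ball y 2, ((un n x)^2 + (vn n x)^2)) ≤ C := by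
    intro n y
    rw [hrm n y]
    have := ENNReal.toReal_mono ENNReal.ofReal_ne_top (hLm_le n y)
    rwa [ENNReal.toReal_ofReal hCnn] at this
  -- the sup of local masses tends to 0
  set T : ℕ → ℝ≥0∞ := fun n => ⨆ c : R3, Lm n c with hT
  have hTle : ∀ n, T n ≤ ENNReal.ofReal C := fun n => iSup_le fun c => hLm_le n c
  have hT0 : Tendsto T atTop (𝓝 0) := by
    rw [ENNReal.tendsto_atTop_zero]
    intro ε hε
    rcases eq_or_ne ε ⊤ with rfl | hεt
    · exact ⟨0, fun n _ => le_top⟩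
    set ε' : ℝ := ε.toReal with hε'
    have hε'pos : 0 < ε' := ENNReal.toReal_pos hε.ne' hεt
    set y : ℕ → R3 := fun n =>
      if h : ∃ c, ENNReal.ofReal (ε'/2) < Lm n c then h.choose else 0 with hy
    have hlim := hcon (ε'/2) (by positivity) y
    have hbd : IsBoundedUnder (· ≤ ·) atTop
        (fun n => ∫ x in Metric.ball (y n) 2, ((un n x)^2 + (vn n x)^2)) :=
      ⟨C, Filter.eventually_atTop.2 ⟨0, fun n _ => hrm_le n (y n)⟩⟩
    have hev := Filter.eventually_atTop.1 (eventually_lt_of_limsup_lt hlim hbd)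
    obtain ⟨N, hN⟩ := hev
    refine ⟨N, fun n hn => ?_⟩
    by_contra hcon2
    push_neg at hcon2
    have hex : ∃ c, ENNReal.ofReal (ε'/2) < Lm n c := by
      have h1 : ENNReal.ofReal (ε'/2) < T n := by
        refine lt_of_le_of_lt ?_ hcon2
        rw [← ENNReal.ofReal_toReal hεt]
        exact ENNReal.ofReal_le_ofReal (by linarith)
      exact lt_iSup_iff.1 h1
    have hyn : ENNReal.ofReal (ε'/2) < Lm n (y n) := by
      rw [hy]
      simp only [dif_pos hex]
      exact hex.choose_spec
    have : ε'/2 < ∫ x in Metric.ball (y n) 2, ((un n x)^2 + (vn n x)^2) := by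
      rw [hrm n (y n)]
      have := (ENNReal.toReal_lt_toReal ENNReal.ofReal_ne_top (hLm_ne_top n (y n))).2 hyn
      rwa [ENNReal.toReal_ofReal (by positivity)] at this
    exact absurd (hN n hn) (not_lt.2 this.le)
  -- measurability of the basic bricks
  have hmu : ∀ n, Measurable fun x => (‖un n x‖₊ : ℝ≥0∞) :=
    fun n => (hun n).1.continuous.measurable.nnnorm.coe_nnreal_ennreal
  have hmv : ∀ n, Measurable fun x => (‖vn n x‖₊ : ℝ≥0∞) :=
    fun n => (hvn n).1.continuous.measurable.nnnorm.coe_nnreal_ennreal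
  -- global H¹ bounds in ℝ≥0∞
  have hAbound : ∀ (w : ℕ → R3 → ℝ), (∀ n, H1 (w n)) →
      (∀ n, Integrable (fun x => (w n x)^2)) →
      (∀ n, Integrable (fun x => ‖gradient (w n) x‖^2)) →
      (∀ n, (∫ x, (w n x)^2) ≤ C) →
      (∀ n, (∫ x, ‖gradient (w n) x‖^2) ≤ C) →
      ∀ n, (∫⁻ x, ((‖w n x‖₊ : ℝ≥0∞) ^ (2:ℝ) + (‖fderiv ℝ (w n) x‖₊ : ℝ≥0∞) ^ (2:ℝ)))
        ≤ ENNReal.ofReal (2 * C) := by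
    intro w hw hw2 hwg2 hwle hwgle n
    have hmw : Measurable fun x => (‖w n x‖₊ : ℝ≥0∞) :=
      (hw n).1.continuous.measurable.nnnorm.coe_nnreal_ennreal
    have e1 : (∫⁻ x, (‖w n x‖₊ : ℝ≥0∞) ^ (2:ℝ)) = ENNReal.ofReal (∫ x, (w n x)^2) := by
      rw [ofReal_integral_eq_lintegral_ofReal (hw2 n) (ae_of_all _ fun x => by positivity)]
      refine lintegral_congr fun x => ?_
      rw [enn_two]
    have e2 : (∫⁻ x, (‖fderiv ℝ (w n) x‖₊ : ℝ≥0∞) ^ (2:ℝ))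
        = ENNReal.ofReal (∫ x, ‖gradient (w n) x‖^2) := by
      rw [ofReal_integral_eq_lintegral_ofReal (hwg2 n) (ae_of_all _ fun x => by positivity)]
      refine lintegral_congr fun x => ?_
      rw [enn_sq_norm, grad_norm_eq]
    rw [lintegral_add_left (hmw.pow_const _), e1, e2,
      ← ENNReal.ofReal_add (integral_nonneg fun x => by positivity)
        (integral_nonneg fun x => by positivity)]
    exact ENNReal.ofReal_le_ofReal (by linarith [hwle n, hwgle n])
  have humass : ∀ n, (∫ x, (un n x)^2) ≤ C := fun n =>
    le_trans (integral_mono (hIntu n) (hInt n) (fun x => by nlinarith [sq_nonneg (vn n x)]))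
      (hmass n)
  have hvmass : ∀ n, (∫ x, (vn n x)^2) ≤ C := fun n =>
    le_trans (integral_mono (hIntv n) (hInt n) (fun x => by nlinarith [sq_nonneg (un n x)]))
      (hmass n)
  have hugmass : ∀ n, (∫ x, ‖gradient (un n) x‖^2) ≤ C := fun n =>
    le_trans (integral_mono (hIntgu n) (hIntg n)
      (fun x => by nlinarith [sq_nonneg ‖gradient (vn n) x‖])) (hgradmass n)
  have hvgmass : ∀ n, (∫ x, ‖gradient (vn n) x‖^2) ≤ C := fun n =>
    le_trans (integral_mono (hIntgv n) (hIntg n)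
      (fun x => by nlinarith [sq_nonneg ‖gradient (un n) x‖])) (hgradmass n)
  have hAu := hAbound un hun hIntu hIntgu humass hugmass
  have hAv := hAbound vn hvn hIntv hIntgv hvmass hvgmass
  -- local L² bounds by T
  have hTun : ∀ n (c : R3), (∫⁻ x in Metric.ball c 2, (‖un n x‖₊ : ℝ≥0∞) ^ (2:ℝ)) ≤ T n := by
    intro n c
    refine le_trans (le_trans (lintegral_mono fun x => ?_) (le_of_eq rfl)) (le_iSup (Lm n) c)
    rw [enn_two]
    exact ENNReal.ofReal_le_ofReal (by nlinarith [sq_nonneg (vn n x)])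
  have hTvn : ∀ n (c : R3), (∫⁻ x in Metric.ball c 2, (‖vn n x‖₊ : ℝ≥0∞) ^ (2:ℝ)) ≤ T n := by
    intro n c
    refine le_trans (le_trans (lintegral_mono fun x => ?_) (le_of_eq rfl)) (le_iSup (Lm n) c)
    rw [enn_two]
    exact ENNReal.ofReal_le_ofReal (by nlinarith [sq_nonneg (un n x)])
  -- global L⁴ bounds
  obtain ⟨C5, hC5t, hC5⟩ := global_four
  set K : ℝ≥0∞ := C5 * (ENNReal.ofReal (2 * C)) ^ ((3:ℝ)/2) with hK
  have hKt : K ≠ ⊤ := ENNReal.mul_ne_top hC5t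
    (ENNReal.rpow_ne_top_of_nonneg (by norm_num) ENNReal.ofReal_ne_top)
  set P4u : ℕ → ℝ≥0∞ := fun n => ∫⁻ x, (‖un n x‖₊ : ℝ≥0∞) ^ (4:ℝ) with hP4udef
  set P4v : ℕ → ℝ≥0∞ := fun n => ∫⁻ x, (‖vn n x‖₊ : ℝ≥0∞) ^ (4:ℝ) with hP4vdef
  have hP4u : ∀ n, P4u n ≤ K * (T n) ^ ((1:ℝ)/2) := by
    intro n
    calc P4u n ≤ C5 * (T n) ^ ((1:ℝ)/2)
          * (∫⁻ x, ((‖un n x‖₊ : ℝ≥0∞) ^ (2:ℝ) + (‖fderiv ℝ (un n) x‖₊ : ℝ≥0∞) ^ (2:ℝ)))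
            ^ ((3:ℝ)/2) := hC5 (un n) (hun n).1 (T n) (hTun n)
      _ ≤ C5 * (T n) ^ ((1:ℝ)/2) * (ENNReal.ofReal (2 * C)) ^ ((3:ℝ)/2) := by
          gcongr
          exact hAu n
      _ = K * (T n) ^ ((1:ℝ)/2) := by rw [hK]; ring
  have hP4v : ∀ n, P4v n ≤ K * (T n) ^ ((1:ℝ)/2) := by
    intro n
    calc P4v n ≤ C5 * (T n) ^ ((1:ℝ)/2)
          * (∫⁻ x, ((‖vn n x‖₊ : ℝ≥0∞) ^ (2:ℝ) + (‖fderiv ℝ (vn n) x‖₊ : ℝ≥0∞) ^ (2:ℝ)))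
            ^ ((3:ℝ)/2) := hC5 (vn n) (hvn n).1 (T n) (hTvn n)
      _ ≤ C5 * (T n) ^ ((1:ℝ)/2) * (ENNReal.ofReal (2 * C)) ^ ((3:ℝ)/2) := by
          gcongr
          exact hAv n
      _ = K * (T n) ^ ((1:ℝ)/2) := by rw [hK]; ring
  -- limits of the L⁴ masses
  have hKT0 : Tendsto (fun n => K * (T n) ^ ((1:ℝ)/2)) atTop (𝓝 0) := by
    have := ENNReal.Tendsto.const_mul (a := K) (sqrt_tendsto hT0) (Or.inr hKt)
    rwa [mul_zero] at this
  have hP4u0 : Tendsto P4u atTop (𝓝 0) :=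
    tendsto_of_tendsto_of_tendsto_of_le_of_le tendsto_const_nhds hKT0
      (fun n => zero_le) hP4u
  have hP4v0 : Tendsto P4v atTop (𝓝 0) :=
    tendsto_of_tendsto_of_tendsto_of_le_of_le tendsto_const_nhds hKT0
      (fun n => zero_le) hP4v
  have toReal_tendsto_zero : ∀ {f : ℕ → ℝ≥0∞}, Tendsto f atTop (𝓝 0) →
      Tendsto (fun n => (f n).toReal) atTop (𝓝 0) := by
    intro f hf
    have := (ENNReal.tendsto_toReal (by simp : (0:ℝ≥0∞) ≠ ⊤)).comp hf
    simpa [Function.comp_def] using this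
  -- finiteness
  have hP4ut : ∀ n, P4u n ≠ ⊤ := fun n => ne_top_of_le_ne_top
    (ENNReal.mul_ne_top hKt (ENNReal.rpow_ne_top_of_nonneg (by norm_num)
      (ne_top_of_le_ne_top ENNReal.ofReal_ne_top (hTle n)))) (hP4u n)
  have hP4vt : ∀ n, P4v n ≠ ⊤ := fun n => ne_top_of_le_ne_top
    (ENNReal.mul_ne_top hKt (ENNReal.rpow_ne_top_of_nonneg (by norm_num)
      (ne_top_of_le_ne_top ENNReal.ofReal_ne_top (hTle n)))) (hP4v n)
  -- bounds on the cubic integrals in ℝ≥0∞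
  set cC : ℝ≥0∞ := (ENNReal.ofReal (2 * C)) ^ ((1:ℝ)/2) with hcC
  have hcCt : cC ≠ ⊤ := ENNReal.rpow_ne_top_of_nonneg (by norm_num) ENNReal.ofReal_ne_top
  have h3u : ∀ n, (∫⁻ x, (‖un n x‖₊ : ℝ≥0∞) ^ (3:ℝ)) ≤ cC * (P4u n) ^ ((1:ℝ)/2) := by
    intro n
    refine le_trans (three_bound (hmu n)) ?_
    rw [hcC]
    gcongr
    refine le_trans (le_trans (lintegral_mono fun x => le_self_add) (hAu n)) le_rfl
  have h3v : ∀ n, (∫⁻ x, (‖vn n x‖₊ : ℝ≥0∞) ^ (3:ℝ)) ≤ cC * (P4v n) ^ ((1:ℝ)/2) := by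
    intro n
    refine le_trans (three_bound (hmv n)) ?_
    rw [hcC]
    gcongr
    refine le_trans (le_trans (lintegral_mono fun x => le_self_add) (hAv n)) le_rfl
  -- real-valued bounds on the three nonlinear integrals
  have habs4 : ∀ n, |∫ x, (un n x)^4| ≤ (P4u n).toReal := by
    intro n
    rw [← Real.norm_eq_abs]
    refine le_trans (norm_integral_le_lintegral_norm _) ?_
    refine le_of_eq ?_
    congr 1
    refine lintegral_congr fun x => ?_
    rw [Real.norm_eq_abs, enn_four]
  have habs3 : ∀ n, |∫ x, (vn n x)^3| ≤ (cC * (P4v n) ^ ((1:ℝ)/2)).toReal := by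
    intro n
    rw [← Real.norm_eq_abs]
    refine le_trans (norm_integral_le_lintegral_norm _) ?_
    refine ENNReal.toReal_mono (ENNReal.mul_ne_top hcCt
      (ENNReal.rpow_ne_top_of_nonneg (by norm_num) (hP4vt n))) ?_
    refine le_trans (le_of_eq ?_) (h3v n)
    refine lintegral_congr fun x => ?_
    rw [Real.norm_eq_abs, enn_three]
  have habs21 : ∀ n, |∫ x, (un n x)^2 * vn n x|
      ≤ (cC * (P4u n) ^ ((1:ℝ)/2) + cC * (P4v n) ^ ((1:ℝ)/2)).toReal := by
    intro n
    rw [← Real.norm_eq_abs]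
    refine le_trans (norm_integral_le_lintegral_norm _) ?_
    refine ENNReal.toReal_mono (ENNReal.add_ne_top.2
      ⟨ENNReal.mul_ne_top hcCt (ENNReal.rpow_ne_top_of_nonneg (by norm_num) (hP4ut n)),
       ENNReal.mul_ne_top hcCt (ENNReal.rpow_ne_top_of_nonneg (by norm_num) (hP4vt n))⟩) ?_
    have e1 : (∫⁻ x, ENNReal.ofReal ‖(un n x)^2 * vn n x‖)
        = ∫⁻ x, (‖un n x‖₊ : ℝ≥0∞) ^ (2:ℝ) * (‖vn n x‖₊ : ℝ≥0∞) := by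
      refine lintegral_congr fun x => ?_
      rw [Real.norm_eq_abs, enn_mixed]
    rw [e1]
    calc ∫⁻ x, (‖un n x‖₊ : ℝ≥0∞) ^ (2:ℝ) * (‖vn n x‖₊ : ℝ≥0∞)
        ≤ ∫⁻ x, ((‖un n x‖₊ : ℝ≥0∞) ^ (3:ℝ) + (‖vn n x‖₊ : ℝ≥0∞) ^ (3:ℝ)) :=
          lintegral_mono fun x => young3 _ _
      _ = (∫⁻ x, (‖un n x‖₊ : ℝ≥0∞) ^ (3:ℝ)) + ∫⁻ x, (‖vn n x‖₊ : ℝ≥0∞) ^ (3:ℝ) :=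
          lintegral_add_left ((hmu n).pow_const _) _
      _ ≤ cC * (P4u n) ^ ((1:ℝ)/2) + cC * (P4v n) ^ ((1:ℝ)/2) :=
          add_le_add (h3u n) (h3v n)
  -- real limits
  have ht1 : Tendsto (fun n => (P4u n).toReal) atTop (𝓝 0) := toReal_tendsto_zero hP4u0
  have hsu : Tendsto (fun n => (cC * (P4u n) ^ ((1:ℝ)/2)).toReal) atTop (𝓝 0) := by
    refine toReal_tendsto_zero ?_
    have := ENNReal.Tendsto.const_mul (a := cC) (sqrt_tendsto hP4u0) (Or.inr hcCt)
    rwa [mul_zero] at this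
  have hsv : Tendsto (fun n => (cC * (P4v n) ^ ((1:ℝ)/2)).toReal) atTop (𝓝 0) := by
    refine toReal_tendsto_zero ?_
    have := ENNReal.Tendsto.const_mul (a := cC) (sqrt_tendsto hP4v0) (Or.inr hcCt)
    rwa [mul_zero] at this
  -- the limsup bound sequence
  set B : ℕ → ℝ := fun n => (1/4) * (P4u n).toReal
    + (1/6) * (cC * (P4v n) ^ ((1:ℝ)/2)).toReal
    + (β/2) * ((cC * (P4u n) ^ ((1:ℝ)/2)).toReal + (cC * (P4v n) ^ ((1:ℝ)/2)).toReal) with hB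
  have hB0 : Tendsto B atTop (𝓝 0) := by
    rw [hB]
    have := ((ht1.const_mul (1/4:ℝ)).add (hsv.const_mul (1/6:ℝ))).add
      ((hsu.add hsv).const_mul (β/2))
    simpa using this
  -- eventual lower bound from J → m < 0
  have hJev : ∀ᶠ n in atTop, J β (un n) (vn n) < m/2 :=
    hJ.eventually_lt_const (by linarith)
  have hfin : ∀ᶠ n in atTop, -m/2 ≤ B n := by
    filter_upwards [hJev] with n hn
    have hG : (0:ℝ) ≤ ∫ x, (‖gradient (un n) x‖^2 + ‖gradient (vn n) x‖^2) :=
      integral_nonneg fun x => by positivity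
    rw [J] at hn
    have h4 : (∫ x, (un n x)^4) ≤ (P4u n).toReal := le_trans (le_abs_self _) (habs4 n)
    have h3 : (∫ x, (vn n x)^3) ≤ (cC * (P4v n) ^ ((1:ℝ)/2)).toReal :=
      le_trans (le_abs_self _) (habs3 n)
    have h21 : (∫ x, (un n x)^2 * vn n x)
        ≤ (cC * (P4u n) ^ ((1:ℝ)/2) + cC * (P4v n) ^ ((1:ℝ)/2)).toReal :=
      le_trans (le_abs_self _) (habs21 n)
    have h21' : (cC * (P4u n) ^ ((1:ℝ)/2) + cC * (P4v n) ^ ((1:ℝ)/2)).toReal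
        ≤ (cC * (P4u n) ^ ((1:ℝ)/2)).toReal + (cC * (P4v n) ^ ((1:ℝ)/2)).toReal :=
      ENNReal.toReal_add_le
    have hb2 : (β/2) * (∫ x, (un n x)^2 * vn n x)
        ≤ (β/2) * ((cC * (P4u n) ^ ((1:ℝ)/2)).toReal + (cC * (P4v n) ^ ((1:ℝ)/2)).toReal) := by
      refine mul_le_mul_of_nonneg_left (le_trans h21 h21') (by positivity)
    rw [hB]
    simp only []
    nlinarith [hn, hG, h4, h3, hb2]
  have hcontr : -m/2 ≤ 0 := ge_of_tendsto hB0 hfin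
  linarith
end
end
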